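/- arXiv:1803.08980 — 3 statements merged into one kernel-verified Lean document; each statement's English description precedes it below -/
import Mathlib

section
/- Suppose that for a fixed control value u* ∈ U the map x ↦ F(x,u*) is locally Lipschitz. Let ξ : [0,T) → ℝ^d (with 0 < T < ∞) satisfy ξ(0) = ξ0, ξ'(t) = F(ξ(t),u*) for all t ∈ [0,T), and the differential inequality W(ξ(t),u*) ≤ -σ·γ(V(ξ(t))) for all t ∈ [0,T). Then: (i) V(ξ(t)) ≤ V(ξ0) for all t ∈ [0,T), so ξ(t) ∈ B(ξ0) for all t and the range of ξ is bounded; (ii) ξ extends to a solution of the same differential equation on the closed interval [0,T] (the solution does not escape to infinity in finite time while the inequality holds). -/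
open Set Filter
open scoped InnerProductSpace Topology

/-- If `ξ` solves `ξ' = F(ξ, u*)` on `[0,T)` (with `F(·,u*)` locally Lipschitz)
and satisfies the differential inequality `W(ξ(t),u*) ≤ -σ·γ(V(ξ(t)))` there, then
(i) `V(ξ(t)) ≤ V(ξ0)` on `[0,T)` (so `ξ` stays in the sublevel set `B(ξ0)`), the range of `ξ`
on `[0,T)` is bounded, and (ii) `ξ` extends to a solution of the same ODE on `[0,T]`. -/
theorem statement0
    (d m : ℕ)
    (F : EuclideanSpace ℝ (Fin d) → EuclideanSpace ℝ (Fin m) → EuclideanSpace ℝ (Fin d))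
    (U : Set (EuclideanSpace ℝ (Fin m)))
    (𝒰 : EuclideanSpace ℝ (Fin d) → EuclideanSpace ℝ (Fin m))
    (V : EuclideanSpace ℝ (Fin d) → ℝ) (γ : ℝ → ℝ) (σ : ℝ)
    (hσ0 : 0 < σ) (hσ1 : σ < 1)
    (hγc : Continuous γ) (hγpos : ∀ v : ℝ, 0 < v → 0 < γ v)
    (hV : ContDiff ℝ 1 V) (hV0 : V 0 = 0) (hVpos : ∀ x, x ≠ 0 → 0 < V x)
    (hVrad : ∀ c : ℝ, ∃ R : ℝ, ∀ x : EuclideanSpace ℝ (Fin d), R ≤ ‖x‖ → c ≤ V x)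
    (h𝒰U : ∀ x, 𝒰 x ∈ U)
    (hfeed : ∀ x, x ≠ 0 → ⟪gradient V x, F x (𝒰 x)⟫_ℝ ≤ -γ (V x))
    -- the fixed control value and the local Lipschitz assumption on `F(·, u*)`
    (u_star : EuclideanSpace ℝ (Fin m)) (hu_star : u_star ∈ U)
    (hF : LocallyLipschitz (fun x => F x u_star))
    -- the solution on `[0, T)`
    (T : ℝ) (hT0 : 0 < T)
    (ξ : ℝ → EuclideanSpace ℝ (Fin d)) (ξ0 : EuclideanSpace ℝ (Fin d))
    (hξ0 : ξ 0 = ξ0)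
    (hode : ∀ t ∈ Ico (0 : ℝ) T, HasDerivWithinAt ξ (F (ξ t) u_star) (Ico (0 : ℝ) T) t)
    (hineq : ∀ t ∈ Ico (0 : ℝ) T,
      ⟪gradient V (ξ t), F (ξ t) u_star⟫_ℝ ≤ -σ * γ (V (ξ t))) :
    (∀ t ∈ Ico (0 : ℝ) T, V (ξ t) ≤ V ξ0) ∧
    (∀ t ∈ Ico (0 : ℝ) T, ξ t ∈ {x | V x ≤ V ξ0}) ∧
    Bornology.IsBounded (ξ '' Ico (0 : ℝ) T) ∧
    (∃ ξext : ℝ → EuclideanSpace ℝ (Fin d),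
      (∀ t ∈ Ico (0 : ℝ) T, ξext t = ξ t) ∧
      (∀ t ∈ Icc (0 : ℝ) T,
        HasDerivWithinAt ξext (F (ξext t) u_star) (Icc (0 : ℝ) T) t)) := by

  -- Basic positivity facts
  have hVdiff : Differentiable ℝ V := hV.differentiable one_ne_zero
  have hVnn : ∀ x, 0 ≤ V x := by
    intro x
    by_cases hx : x = 0
    · simp [hx, hV0]
    · exact (hVpos x hx).le
  have hγ0 : 0 ≤ γ 0 := by
    have h1 : Tendsto γ (𝓝[>] (0:ℝ)) (𝓝 (γ 0)) := (hγc.tendsto 0).mono_left nhdsWithin_le_nhds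
    exact ge_of_tendsto h1 (eventually_nhdsWithin_of_forall fun v hv => (hγpos v hv).le)
  have hγnn : ∀ v : ℝ, 0 ≤ v → 0 ≤ γ v := by
    intro v hv
    rcases hv.lt_or_eq with h | h
    · exact (hγpos v h).le
    · simpa [← h] using hγ0
  -- Chain rule : derivative of V ∘ ξ
  have hcomp : ∀ t ∈ Ico (0 : ℝ) T,
      HasDerivWithinAt (V ∘ ξ) (⟪gradient V (ξ t), F (ξ t) u_star⟫_ℝ) (Ico (0 : ℝ) T) t := by
    intro t ht
    have hg : HasFDerivAt V (InnerProductSpace.toDual ℝ _ (gradient V (ξ t))) (ξ t) :=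
      hasGradientAt_iff_hasFDerivAt.1 (hVdiff (ξ t)).hasGradientAt
    have := hg.comp_hasDerivWithinAt t (hode t ht)
    simpa [InnerProductSpace.toDual_apply_apply] using this
  have hVanti : AntitoneOn (V ∘ ξ) (Ico (0 : ℝ) T) := by
    apply antitoneOn_of_deriv_nonpos (convex_Ico 0 T)
    · exact fun t ht => (hcomp t ht).continuousWithinAt
    · rw [interior_Ico]
      intro x hx
      exact (((hcomp x (Ioo_subset_Ico_self hx)).hasDerivAt
        (Ico_mem_nhds hx.1 hx.2)).differentiableAt).differentiableWithinAt
    · rw [interior_Ico]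
      intro x hx
      have hd : HasDerivAt (V ∘ ξ) (⟪gradient V (ξ x), F (ξ x) u_star⟫_ℝ) x :=
        (hcomp x (Ioo_subset_Ico_self hx)).hasDerivAt (Ico_mem_nhds hx.1 hx.2)
      rw [hd.deriv]
      have h1 := hineq x (Ioo_subset_Ico_self hx)
      have h2 : 0 ≤ γ (V (ξ x)) := hγnn _ (hVnn _)
      nlinarith
  have hVle : ∀ t ∈ Ico (0 : ℝ) T, V (ξ t) ≤ V ξ0 := by
    intro t ht
    have h0 : (0 : ℝ) ∈ Ico (0 : ℝ) T := ⟨le_rfl, hT0⟩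
    have := hVanti h0 ht ht.1
    simpa [Function.comp, hξ0] using this
  -- boundedness
  obtain ⟨R, hR⟩ := hVrad (V ξ0 + 1)
  have hball : ∀ t ∈ Ico (0 : ℝ) T, ‖ξ t‖ < R := by
    intro t ht
    by_contra h
    have := hR (ξ t) (not_lt.1 h)
    have := hVle t ht
    linarith
  have hbdd : Bornology.IsBounded (ξ '' Ico (0 : ℝ) T) := by
    apply (Metric.isBounded_closedBall (x := (0 : EuclideanSpace ℝ (Fin d))) (r := R)).subset
    rintro _ ⟨t, ht, rfl⟩
    exact mem_closedBall_zero_iff.2 (hball t ht).le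
  -- bound on the vector field along the solution
  have hFc : Continuous (fun x => F x u_star) := hF.continuous
  obtain ⟨C0, hC0⟩ := (isCompact_closedBall (0 : EuclideanSpace ℝ (Fin d)) R).exists_bound_of_continuousOn hFc.continuousOn
  set C : ℝ := max C0 0 with hCdef
  have hCnn : 0 ≤ C := le_max_right _ _
  have hC : ∀ t ∈ Ico (0 : ℝ) T, ‖F (ξ t) u_star‖ ≤ C := fun t ht =>
    le_trans (hC0 _ (mem_closedBall_zero_iff.2 (hball t ht).le)) (le_max_left _ _)
  have hlip : ∀ a ∈ Ico (0 : ℝ) T, ∀ b ∈ Ico (0 : ℝ) T, ‖ξ b - ξ a‖ ≤ C * ‖b - a‖ :=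
    fun a ha b hb => (convex_Ico 0 T).norm_image_sub_le_of_norm_hasDerivWithin_le hode hC ha hb
  -- Cauchy at the endpoint
  haveI hne : (𝓝[Ico (0 : ℝ) T] T).NeBot :=
    mem_closure_iff_nhdsWithin_neBot.1 (by rw [closure_Ico hT0.ne]; exact ⟨hT0.le, le_rfl⟩)
  have hcauchy : Cauchy (Filter.map ξ (𝓝[Ico (0 : ℝ) T] T)) := by
    rw [Metric.cauchy_iff]
    refine ⟨Filter.map_neBot, fun ε hε => ?_⟩
    have hδ : 0 < ε / (C + 1) := by positivity
    refine ⟨ξ '' (Ioi (T - ε / (C + 1)) ∩ Ico (0 : ℝ) T), ?_, ?_⟩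
    · exact image_mem_map (inter_mem
        (mem_nhdsWithin_of_mem_nhds (Ioi_mem_nhds (by linarith))) self_mem_nhdsWithin)
    · rintro _ ⟨a, ⟨ha1, ha2⟩, rfl⟩ _ ⟨b, ⟨hb1, hb2⟩, rfl⟩
      rw [dist_eq_norm]
      have h1 := hlip b hb2 a ha2
      have h2 : |a - b| < ε / (C + 1) := by
        rw [abs_sub_lt_iff]
        constructor <;> [skip; skip] <;>
          · have := ha2.2; have := hb2.2
            simp only [mem_Ioi] at ha1 hb1
            linarith
      have h3 : ‖a - b‖ = |a - b| := rfl
      calc ‖ξ a - ξ b‖ ≤ C * ‖a - b‖ := h1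
        _ = C * |a - b| := by rw [h3]
        _ ≤ C * (ε / (C + 1)) := by
            apply mul_le_mul_of_nonneg_left h2.le hCnn
        _ < ε := by
            rw [mul_comm, div_mul_eq_mul_div, div_lt_iff₀ (by linarith : (0:ℝ) < C + 1)]
            nlinarith
  obtain ⟨L, hL0⟩ := CompleteSpace.complete hcauchy
  have hL : Tendsto ξ (𝓝[Ico (0 : ℝ) T] T) (𝓝 L) := hL0
  -- the extension
  set ξe : ℝ → EuclideanSpace ℝ (Fin d) := fun t => if t < T then ξ t else L with hξedef
  have heq : ∀ t ∈ Ico (0 : ℝ) T, ξe t = ξ t := fun t ht => if_pos ht.2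
  have hξeT : ξe T = L := if_neg (lt_irrefl T)
  have hDA : ∀ x ∈ Ioo (0 : ℝ) T, HasDerivAt ξe (F (ξ x) u_star) x := by
    intro x hx
    have h1 : HasDerivAt ξ (F (ξ x) u_star) x :=
      (hode x (Ioo_subset_Ico_self hx)).hasDerivAt (Ico_mem_nhds hx.1 hx.2)
    apply h1.congr_of_eventuallyEq
    filter_upwards [Iio_mem_nhds hx.2] with y hy
    exact if_pos hy
  have htendξ : Tendsto ξ (𝓝[<] T) (𝓝 L) := by
    rw [← nhdsWithin_Ioo_eq_nhdsLT hT0]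
    exact hL.mono_left (nhdsWithin_mono _ Ioo_subset_Ico_self)
  have hIoo_mem : Ioo (0 : ℝ) T ∈ 𝓝[<] T := by
    rw [← Ioi_inter_Iio]
    exact inter_mem (mem_nhdsWithin_of_mem_nhds (Ioi_mem_nhds hT0)) self_mem_nhdsWithin
  have htendF : Tendsto (fun x => deriv ξe x) (𝓝[<] T) (𝓝 (F L u_star)) := by
    have h1 : Tendsto (fun t => F (ξ t) u_star) (𝓝[<] T) (𝓝 (F L u_star)) :=
      (hFc.tendsto L).comp htendξ
    apply h1.congr'
    filter_upwards [hIoo_mem] with t ht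
    exact ((hDA t ht).deriv).symm
  have hcontT : ContinuousWithinAt ξe (Ioo (0 : ℝ) T) T := by
    rw [ContinuousWithinAt, hξeT]
    have h1 : Tendsto ξ (𝓝[Ioo (0 : ℝ) T] T) (𝓝 L) :=
      hL.mono_left (nhdsWithin_mono _ Ioo_subset_Ico_self)
    apply h1.congr'
    filter_upwards [self_mem_nhdsWithin] with t ht
    exact (if_pos ht.2).symm
  have hdiffo : DifferentiableOn ℝ ξe (Ioo (0 : ℝ) T) :=
    fun x hx => ((hDA x hx).differentiableAt).differentiableWithinAt
  have hT' : HasDerivWithinAt ξe (F (ξe T) u_star) (Icc (0 : ℝ) T) T := by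
    rw [hξeT]
    exact (hasDerivWithinAt_Iic_of_tendsto_deriv hdiffo hcontT hIoo_mem htendF).mono
      Icc_subset_Iic_self
  refine ⟨hVle, fun t ht => hVle t ht, hbdd, ξe, heq, ?_⟩
  intro t ht
  rcases ht.2.lt_or_eq with hlt | hTt
  · have hmem : t ∈ Ico (0 : ℝ) T := ⟨ht.1, hlt⟩
    have h1 : HasDerivWithinAt ξe (F (ξ t) u_star) (Ico (0 : ℝ) T) t :=
      (hode t hmem).congr (fun y hy => heq y hy) (heq t hmem)
    rw [heq t hmem]
    apply h1.mono_of_mem_nhdsWithin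
    apply Filter.mem_of_superset
      (inter_mem self_mem_nhdsWithin
        (mem_nhdsWithin_of_mem_nhds (Iio_mem_nhds hlt)))
    rintro y ⟨hy1, hy2⟩
    exact ⟨hy1.1, hy2⟩
  · subst hTt
    exact hT'
end

section
/- Let Assumptions 1–4' hold and let γ be either non-decreasing on [0,∞) or C¹. Then there exists a function τ : ℝ^d → (0,∞) such that: (i) inf_{x ∈ K} τ(x) > 0 for every compact set K ⊆ ℝ^d; (ii) for every x* ≠ 0 there exists a solution ξ : [0, τ(x*)] → ℝ^d of ξ'(t) = F(ξ(t), 𝒰(x*)) with ξ(0) = x*, and this solution satisfies the strict inequality W(ξ(t), 𝒰(x*)) < -σ·γ(V(ξ(t))) for all t ∈ [0, τ(x*)). -/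
open Set Filter
open scoped InnerProductSpace

open Metric Real
open scoped NNReal Topology

/-- A locally Lipschitz map admits a Lipschitz bound on every compact set. -/
lemma locallyLipschitz_compact_bound {α β : Type*} [MetricSpace α] [MetricSpace β]
    {f : α → β} (hf : LocallyLipschitz f) {s : Set α} (hs : IsCompact s) :
    ∃ C : ℝ, 0 ≤ C ∧ ∀ x ∈ s, ∀ y ∈ s, dist (f x) (f y) ≤ C * dist x y := by
  rcases s.eq_empty_or_nonempty with rfl | hne
  · exact ⟨0, le_rfl, by simp⟩
  have hcont := hf.continuous
  choose K t ht hlip using hf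
  choose r hr hball using fun x => Metric.mem_nhds_iff.mp (ht x)
  obtain ⟨I, hIs, hcover⟩ := hs.elim_nhds_subcover (fun x => ball x (r x / 2))
    (fun x _ => ball_mem_nhds x (by have := hr x; positivity))
  have hI : I.Nonempty := by
    obtain ⟨x, hx⟩ := hne
    obtain ⟨i, hi, _⟩ := Set.mem_iUnion₂.mp (hcover hx)
    exact ⟨i, hi⟩
  set δ : ℝ := I.inf' hI (fun i => r i / 2) with hδdef
  have hδpos : 0 < δ := by
    rw [hδdef, Finset.lt_inf'_iff]
    intro i _
    have := hr i; positivity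
  set K' : ℝ := I.sup' hI (fun i => (K i : ℝ)) with hK'def
  obtain ⟨D, hD⟩ := Metric.isBounded_iff.mp (hs.image hcont).isBounded
  refine ⟨max (max K' (D / δ)) 0, le_max_right _ _, fun x hx y hy => ?_⟩
  rcases lt_or_ge (dist x y) δ with hlt | hge
  · obtain ⟨i, hiI, hxi⟩ := Set.mem_iUnion₂.mp (hcover hx)
    have hδi : δ ≤ r i / 2 := Finset.inf'_le _ hiI
    have hxball : x ∈ ball i (r i) := by
      have : dist x i < r i / 2 := mem_ball.mp hxi
      exact mem_ball.mpr (by linarith [hr i])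
    have hyball : y ∈ ball i (r i) := by
      have h1 : dist x i < r i / 2 := mem_ball.mp hxi
      have : dist y i ≤ dist y x + dist x i := dist_triangle _ _ _
      rw [dist_comm] at hlt
      exact mem_ball.mpr (by linarith)
    have := (hlip i).dist_le_mul x (hball i hxball) y (hball i hyball)
    calc dist (f x) (f y) ≤ (K i : ℝ) * dist x y := this
      _ ≤ max (max K' (D / δ)) 0 * dist x y := by
          apply mul_le_mul_of_nonneg_right _ dist_nonneg
          exact le_trans (Finset.le_sup' (fun i => (K i : ℝ)) hiI)
            (le_trans (le_max_left _ _) (le_max_left _ _))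
  · have h1 : dist (f x) (f y) ≤ D := hD (mem_image_of_mem f hx) (mem_image_of_mem f hy)
    have hD0 : 0 ≤ D := le_trans dist_nonneg h1
    calc dist (f x) (f y) ≤ D := h1
      _ = D / δ * δ := by field_simp
      _ ≤ D / δ * dist x y := by
          apply mul_le_mul_of_nonneg_left hge (by positivity)
      _ ≤ max (max K' (D / δ)) 0 * dist x y := by
          apply mul_le_mul_of_nonneg_right _ dist_nonneg
          exact le_trans (le_max_right _ _) (le_max_left _ _)

/-- The set of difference quotients of `f` on `s`. -/
def ratioSet {α β : Type*} [MetricSpace α] [MetricSpace β] (f : α → β) (s : Set α) : Set ℝ :=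
  {c | ∃ x ∈ s, ∃ y ∈ s, c = dist (f x) (f y) / dist x y}

/-- The canonical Lipschitz constant of `f` on `s`. -/
noncomputable def lipConst {α β : Type*} [MetricSpace α] [MetricSpace β]
    (f : α → β) (s : Set α) : ℝ :=
  sSup (ratioSet f s)

lemma ratioSet_nonneg {α β : Type*} [MetricSpace α] [MetricSpace β] {f : α → β} {s : Set α} :
    ∀ c ∈ ratioSet f s, 0 ≤ c := by
  rintro c ⟨x, hx, y, hy, rfl⟩
  positivity

lemma lipConst_nonneg {α β : Type*} [MetricSpace α] [MetricSpace β] (f : α → β) (s : Set α) :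
    0 ≤ lipConst f s :=
  Real.sSup_nonneg ratioSet_nonneg

lemma bddAbove_ratioSet {α β : Type*} [MetricSpace α] [MetricSpace β] {f : α → β} {s : Set α}
    {C : ℝ} (h : ∀ x ∈ s, ∀ y ∈ s, dist (f x) (f y) ≤ C * dist x y) :
    BddAbove (ratioSet f s) := by
  refine ⟨max C 0, ?_⟩
  rintro c ⟨x, hx, y, hy, rfl⟩
  rcases eq_or_ne (dist x y) 0 with h0 | h0
  · simp [h0]
  · have hpos : 0 < dist x y := lt_of_le_of_ne dist_nonneg (Ne.symm h0)
    rw [div_le_iff₀ hpos]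
    exact le_trans (h x hx y hy) (mul_le_mul_of_nonneg_right (le_max_left _ _) dist_nonneg)

lemma lipConst_dist_le {α β : Type*} [MetricSpace α] [MetricSpace β] {f : α → β} {s : Set α}
    (hb : BddAbove (ratioSet f s)) {x y : α} (hx : x ∈ s) (hy : y ∈ s) :
    dist (f x) (f y) ≤ lipConst f s * dist x y := by
  rcases eq_or_ne x y with rfl | hxy
  · simp
  · have hpos : 0 < dist x y := dist_pos.mpr hxy
    have hmem : dist (f x) (f y) / dist x y ∈ ratioSet f s := ⟨x, hx, y, hy, rfl⟩
    have := le_csSup hb hmem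
    calc dist (f x) (f y) = dist (f x) (f y) / dist x y * dist x y := by field_simp
      _ ≤ lipConst f s * dist x y := mul_le_mul_of_nonneg_right this (le_of_lt hpos)

lemma lipConst_mono {α β : Type*} [MetricSpace α] [MetricSpace β] {f : α → β} {s s' : Set α}
    (hsub : s ⊆ s') (hb : BddAbove (ratioSet f s')) :
    lipConst f s ≤ lipConst f s' := by
  rcases (ratioSet f s).eq_empty_or_nonempty with he | hne
  · rw [lipConst, he, Real.sSup_empty]
    exact lipConst_nonneg _ _
  · apply csSup_le_csSup hb hne
    rintro c ⟨x, hx, y, hy, rfl⟩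
    exact ⟨x, hsub hx, y, hsub hy, rfl⟩

/-- `exp s - 1 ≤ s * exp s` for `s ≥ 0`. -/
lemma exp_sub_one_le (s : ℝ) : Real.exp s - 1 ≤ s * Real.exp s := by
  have h := Real.add_one_le_exp (-s)
  have hpos : 0 < Real.exp s := Real.exp_pos s
  have h2 : (-s + 1) * Real.exp s ≤ Real.exp (-s) * Real.exp s :=
    mul_le_mul_of_nonneg_right h (le_of_lt hpos)
  rw [← Real.exp_add, neg_add_cancel, Real.exp_zero] at h2
  linarith

set_option maxHeartbeats 2000000 in
lemma key {d : ℕ} (V : EuclideanSpace ℝ (Fin d) → ℝ) (hV : ContDiff ℝ 1 V)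
    (γ : ℝ → ℝ) (σ : ℝ) (hσ0 : 0 < σ) (hσ1 : σ < 1)
    (f : EuclideanSpace ℝ (Fin d) → EuclideanSpace ℝ (Fin d)) (xs : EuclideanSpace ℝ (Fin d))
    (hVxs : 0 < V xs) (hVnn : ∀ x, 0 ≤ V x)
    (hW₀ : ⟪gradient V xs, f xs⟫_ℝ ≤ -γ (V xs)) (hγVxs : 0 < γ (V xs))
    (κ₀ ν₀ L₀ M₀ : ℝ) (hκ₀ : 0 ≤ κ₀) (hν₀ : 0 ≤ ν₀) (hL₀ : 0 ≤ L₀) (hM₀ : 0 < M₀)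
    (hfB : ∀ x1, V x1 ≤ V xs → ∀ x2, V x2 ≤ V xs → ‖f x1 - f x2‖ ≤ κ₀ * ‖x1 - x2‖)
    (hgB : ∀ x1, V x1 ≤ V xs → ∀ x2, V x2 ≤ V xs →
      ‖gradient V x1 - gradient V x2‖ ≤ ν₀ * ‖x1 - x2‖)
    (hQ1 : ‖f xs‖ ^ 2 ≤ M₀ * (-⟪gradient V xs, f xs⟫_ℝ))
    (hQ2 : ‖gradient V xs‖ * ‖f xs‖ ≤ M₀ * (-⟪gradient V xs, f xs⟫_ℝ))
    (hγcmp : ∀ a ∈ Icc (0 : ℝ) (V xs), γ a ≤ γ (V xs) + L₀ * (V xs - a))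
    (T : ℝ) (hT0 : 0 < T)
    (hT1 : T * ((lipschitzExtensionConstant (EuclideanSpace ℝ (Fin d)) : ℝ) * κ₀ + 1) ≤ 1)
    (hTC : T * (3 * M₀ * (ν₀ + 3 * ν₀ * κ₀ + κ₀) + 2 * σ * L₀) ≤ (1 - σ) / 4) :
    ∃ ξ : ℝ → EuclideanSpace ℝ (Fin d), ξ 0 = xs ∧
      (∀ t ∈ Icc (0 : ℝ) T, HasDerivWithinAt ξ (f (ξ t)) (Icc (0 : ℝ) T) t) ∧
      (∀ t ∈ Ico (0 : ℝ) T, ⟪gradient V (ξ t), f (ξ t)⟫_ℝ < -σ * γ (V (ξ t))) := by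
  -- opaque constants
  obtain ⟨eC, heC, heCdef⟩ : ∃ c : ℝ, 0 ≤ c ∧
      ((lipschitzExtensionConstant (EuclideanSpace ℝ (Fin d)) : ℝ≥0) : ℝ) = c :=
    ⟨_, (lipschitzExtensionConstant (EuclideanSpace ℝ (Fin d))).coe_nonneg, rfl⟩
  rw [heCdef] at hT1
  obtain ⟨W₀, hW₀def⟩ : ∃ w : ℝ, ⟪gradient V xs, f xs⟫_ℝ = w := ⟨_, rfl⟩
  rw [hW₀def] at hW₀ hQ1 hQ2
  obtain ⟨P, hP, hPdef⟩ : ∃ p : ℝ, 0 ≤ p ∧ ‖f xs‖ = p := ⟨_, norm_nonneg _, rfl⟩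
  rw [hPdef] at hQ1 hQ2
  obtain ⟨G, hG, hGdef⟩ : ∃ p : ℝ, 0 ≤ p ∧ ‖gradient V xs‖ = p := ⟨_, norm_nonneg _, rfl⟩
  rw [hGdef] at hQ2
  have hW₀neg : W₀ < 0 := lt_of_le_of_lt hW₀ (by linarith)
  obtain ⟨W', hW', hW'W⟩ : ∃ w : ℝ, 0 < w ∧ W₀ = -w := ⟨-W₀, by linarith, by ring⟩
  rw [hW'W] at hQ1 hQ2
  simp only [neg_neg] at hQ1 hQ2
  obtain ⟨κ₁, hκ₁, hκ₁def⟩ : ∃ k : ℝ, 0 ≤ k ∧ eC * κ₀ = k := ⟨_, mul_nonneg heC hκ₀, rfl⟩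
  rw [hκ₁def] at hT1
  obtain ⟨K, hKdef⟩ : ∃ k : ℝ, κ₁ + 1 = k := ⟨_, rfl⟩
  rw [hKdef] at hT1
  have hK : 0 < K := by rw [← hKdef]; positivity
  have hKκ : κ₁ ≤ K := by rw [← hKdef]; linarith
  have hTK : T * K ≤ 1 := hT1
  have hK1 : (1:ℝ) ≤ K := by rw [← hKdef]; linarith
  have hT1' : T ≤ 1 := by
    have := mul_le_mul_of_nonneg_left hK1 hT0.le
    rw [mul_one] at this
    linarith
  obtain ⟨C₁, hC₁def⟩ : ∃ c : ℝ, 3 * M₀ * (ν₀ + 3 * ν₀ * κ₀ + κ₀) = c := ⟨_, rfl⟩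
  rw [hC₁def] at hTC
  have hC₁ : 0 ≤ C₁ := by rw [← hC₁def]; positivity
  have hTC₁ : T * C₁ ≤ (1 - σ) / 4 := by
    have h0 : 0 ≤ T * (2 * σ * L₀) :=
      mul_nonneg hT0.le (mul_nonneg (mul_nonneg (by norm_num) hσ0.le) hL₀)
    have he : T * (C₁ + 2 * σ * L₀) = T * C₁ + T * (2 * σ * L₀) := by ring
    linarith
  have hTL : T * (2 * σ * L₀) ≤ (1 - σ) / 4 := by
    have h0 : 0 ≤ T * C₁ := mul_nonneg hT0.le hC₁
    have he : T * (C₁ + 2 * σ * L₀) = T * C₁ + T * (2 * σ * L₀) := by ring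
    linarith
  have hxsB : V xs ≤ V xs := le_rfl
  -- Lipschitz extension of f from the sublevel set B
  have hflip : LipschitzOnWith κ₀.toNNReal f {x | V x ≤ V xs} := by
    apply LipschitzOnWith.of_dist_le_mul
    intro x hx y hy
    rw [dist_eq_norm, dist_eq_norm, Real.coe_toNNReal κ₀ hκ₀]
    exact hfB x hx y hy
  obtain ⟨ft, hftlip, hfteq⟩ := hflip.extend_finite_dimension
  have hftxs : ‖ft xs‖ = P := by rw [← (hfteq hxsB), hPdef]
  have hlipR : ∀ x y : EuclideanSpace ℝ (Fin d), ‖ft x - ft y‖ ≤ κ₁ * ‖x - y‖ := by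
    intro x y
    have h := hftlip.dist_le_mul x y
    rw [dist_eq_norm, dist_eq_norm] at h
    calc ‖ft x - ft y‖
        ≤ ((lipschitzExtensionConstant (EuclideanSpace ℝ (Fin d)) * κ₀.toNNReal : ℝ≥0) : ℝ)
          * ‖x - y‖ := h
      _ = κ₁ * ‖x - y‖ := by
          rw [NNReal.coe_mul, Real.coe_toNNReal κ₀ hκ₀, heCdef, hκ₁def]

  -- Picard-Lindelöf
  have hpl : IsPicardLindelof (fun _ : ℝ => ft) (tmin := 0) (tmax := T) ⟨0, le_rfl, hT0.le⟩ xs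
      (P + 1).toNNReal 0 (K * (P + 1)).toNNReal
      (lipschitzExtensionConstant (EuclideanSpace ℝ (Fin d)) * κ₀.toNNReal) := by
    apply IsPicardLindelof.of_time_independent
    · intro x hx
      rw [Real.coe_toNNReal _ (by positivity)]
      have h1 : ‖ft x - ft xs‖ ≤ κ₁ * ‖x - xs‖ := hlipR x xs
      have h2 : ‖x - xs‖ ≤ P + 1 := by
        rw [← dist_eq_norm]
        have := mem_closedBall.mp hx
        rwa [Real.coe_toNNReal _ (by positivity)] at this
      have h3 : ‖ft x‖ ≤ ‖ft x - ft xs‖ + ‖ft xs‖ := by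
        simpa using norm_add_le (ft x - ft xs) (ft xs)
      rw [hftxs] at h3
      have h4 : κ₁ * ‖x - xs‖ ≤ κ₁ * (P + 1) := mul_le_mul_of_nonneg_left h2 hκ₁
      have h5 : κ₁ * (P + 1) + P ≤ K * (P + 1) := by rw [← hKdef]; ring_nf; linarith
      linarith
    · exact hftlip.lipschitzOnWith
    · have hmax : max (T - 0) (0 - 0) = T := by
        rw [sub_zero, sub_zero]; exact max_eq_left (le_of_lt hT0)
      simp only [hmax, Real.coe_toNNReal _ (by positivity : (0:ℝ) ≤ P + 1),
        Real.coe_toNNReal _ (by positivity : (0:ℝ) ≤ K * (P + 1)), NNReal.coe_zero, sub_zero,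
        max_eq_left hT0.le]
      linarith [mul_le_mul_of_nonneg_right hTK (by linarith : (0:ℝ) ≤ P + 1)]
  obtain ⟨ξ, hξ0', hξd⟩ := hpl.exists_eq_forall_mem_Icc_hasDerivWithinAt₀
  have hξ0 : ξ 0 = xs := hξ0'
  have hξcont : ContinuousOn ξ (Icc 0 T) := fun t ht => (hξd t ht).continuousWithinAt
  -- Gronwall estimate: ‖ξ t - xs‖ ≤ 3 P t
  have hrad : ∀ t ∈ Icc (0 : ℝ) T, ‖ξ t - xs‖ ≤ 3 * P * t := by
    have hyd : ∀ t ∈ Ico (0 : ℝ) T,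
        HasDerivWithinAt (fun s => ξ s - xs) (ft (ξ t)) (Ici t) t := fun t ht =>
      ((hξd t (Ico_subset_Icc_self ht)).sub_const xs).mono_of_mem_nhdsWithin
        (Icc_mem_nhdsGE_of_mem ht)
    have hbound : ∀ t ∈ Ico (0 : ℝ) T, ‖ft (ξ t)‖ ≤ K * ‖ξ t - xs‖ + P := by
      intro t _
      have h1 : ‖ft (ξ t) - ft xs‖ ≤ κ₁ * ‖ξ t - xs‖ := hlipR _ _
      have h2 : ‖ft (ξ t)‖ ≤ ‖ft (ξ t) - ft xs‖ + ‖ft xs‖ := by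
        simpa using norm_add_le (ft (ξ t) - ft xs) (ft xs)
      rw [hftxs] at h2
      have h3 : κ₁ * ‖ξ t - xs‖ ≤ K * ‖ξ t - xs‖ :=
        mul_le_mul_of_nonneg_right hKκ (norm_nonneg _)
      linarith
    have hcont' : ContinuousOn (fun s => ξ s - xs) (Icc 0 T) :=
      hξcont.sub continuousOn_const
    have hbase : ‖ξ 0 - xs‖ ≤ 0 := by rw [hξ0]; simp
    have hgron := norm_le_gronwallBound_of_norm_deriv_right_le hcont' hyd hbase hbound
    intro t ht
    have h := hgron t ht
    rw [sub_zero, gronwallBound_of_K_ne_0 (ne_of_gt hK)] at h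
    have hKt1 : K * t ≤ 1 := by
      calc K * t ≤ K * T := mul_le_mul_of_nonneg_left ht.2 (le_of_lt hK)
        _ = T * K := mul_comm _ _
        _ ≤ 1 := hTK
    have hKt0 : 0 ≤ K * t := mul_nonneg (le_of_lt hK) ht.1
    have hexp3 : Real.exp (K * t) ≤ 3 := by
      calc Real.exp (K * t) ≤ Real.exp 1 := Real.exp_le_exp.mpr hKt1
        _ ≤ 3 := by linarith [Real.exp_one_lt_d9]
    have hexp : Real.exp (K * t) - 1 ≤ K * t * 3 := by
      have hpos : (0 : ℝ) < Real.exp (K * t) := Real.exp_pos _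
      have hmul : Real.exp (-(K * t)) * Real.exp (K * t) = 1 := by
        rw [← Real.exp_add, neg_add_cancel, Real.exp_zero]
      have hb := mul_le_mul_of_nonneg_right (Real.add_one_le_exp (-(K * t))) (le_of_lt hpos)
      rw [hmul] at hb
      have h1 : Real.exp (K * t) - 1 ≤ K * t * Real.exp (K * t) := by linarith [hb]
      linarith [mul_le_mul_of_nonneg_left hexp3 hKt0]
    calc ‖ξ t - xs‖ ≤ 0 * Real.exp (K * t) + P / K * (Real.exp (K * t) - 1) := h
      _ ≤ 0 + P / K * (K * t * 3) := by
          have h0 : 0 ≤ P / K := div_nonneg hP (le_of_lt hK)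
          have := mul_le_mul_of_nonneg_left hexp h0
          simp only [zero_mul]
          linarith
      _ = 3 * P * t := by field_simp; ring
  -- the key W-estimate
  have hWest : ∀ t ∈ Icc (0 : ℝ) T, V (ξ t) ≤ V xs →
      |⟪gradient V (ξ t), f (ξ t)⟫_ℝ - W₀| ≤ (1 - σ) / 4 * W' := by
    intro t ht hB
    have hd : ‖ξ t - xs‖ ≤ 3 * P * t := hrad t ht
    have hsplit : ⟪gradient V (ξ t), f (ξ t)⟫_ℝ - W₀
        = ⟪gradient V (ξ t) - gradient V xs, f (ξ t)⟫_ℝ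
          + ⟪gradient V xs, f (ξ t) - f xs⟫_ℝ := by
      rw [← hW₀def, inner_sub_left, inner_sub_right]; ring
    have hgd : ‖gradient V (ξ t) - gradient V xs‖ ≤ ν₀ * ‖ξ t - xs‖ := hgB _ hB xs hxsB
    have hfd : ‖f (ξ t) - f xs‖ ≤ κ₀ * ‖ξ t - xs‖ := hfB _ hB xs hxsB
    have hfx : ‖f (ξ t)‖ ≤ P + κ₀ * ‖ξ t - xs‖ := by
      have h5 := norm_add_le (f (ξ t) - f xs) (f xs)
      simp only [sub_add_cancel] at h5
      rw [hPdef] at *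
      linarith
    have habs : |⟪gradient V (ξ t), f (ξ t)⟫_ℝ - W₀|
        ≤ ν₀ * ‖ξ t - xs‖ * (P + κ₀ * ‖ξ t - xs‖) + G * (κ₀ * ‖ξ t - xs‖) := by
      rw [hsplit]
      calc |⟪gradient V (ξ t) - gradient V xs, f (ξ t)⟫_ℝ
            + ⟪gradient V xs, f (ξ t) - f xs⟫_ℝ|
          ≤ |⟪gradient V (ξ t) - gradient V xs, f (ξ t)⟫_ℝ|
            + |⟪gradient V xs, f (ξ t) - f xs⟫_ℝ| := abs_add_le _ _
        _ ≤ ‖gradient V (ξ t) - gradient V xs‖ * ‖f (ξ t)‖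
            + ‖gradient V xs‖ * ‖f (ξ t) - f xs‖ := by
            gcongr <;> exact abs_real_inner_le_norm _ _
        _ ≤ ν₀ * ‖ξ t - xs‖ * (P + κ₀ * ‖ξ t - xs‖) + G * (κ₀ * ‖ξ t - xs‖) := by
            have m1 : ‖gradient V (ξ t) - gradient V xs‖ * ‖f (ξ t)‖
                ≤ ν₀ * ‖ξ t - xs‖ * (P + κ₀ * ‖ξ t - xs‖) :=
              mul_le_mul hgd hfx (norm_nonneg _) (by positivity)
            have m2 : ‖gradient V xs‖ * ‖f (ξ t) - f xs‖ ≤ G * (κ₀ * ‖ξ t - xs‖) := by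
              rw [hGdef]
              exact mul_le_mul_of_nonneg_left hfd hG
            linarith
    have ht1 : 0 ≤ t := ht.1
    have htT : t ≤ T := ht.2
    have htle1 : t ≤ 1 := le_trans htT hT1'
    have hxx : 0 ≤ ‖ξ t - xs‖ := norm_nonneg _
    have hstep : ν₀ * ‖ξ t - xs‖ * (P + κ₀ * ‖ξ t - xs‖) + G * (κ₀ * ‖ξ t - xs‖)
        ≤ 3 * t * ν₀ * P ^ 2 + 9 * t ^ 2 * ν₀ * κ₀ * P ^ 2 + 3 * t * κ₀ * (G * P) := by
      have e1 : ν₀ * ‖ξ t - xs‖ ≤ ν₀ * (3 * P * t) := mul_le_mul_of_nonneg_left hd hν₀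
      have e2 : P + κ₀ * ‖ξ t - xs‖ ≤ P + κ₀ * (3 * P * t) := by
        have := mul_le_mul_of_nonneg_left hd hκ₀; linarith
      have e3 : ν₀ * ‖ξ t - xs‖ * (P + κ₀ * ‖ξ t - xs‖)
          ≤ ν₀ * (3 * P * t) * (P + κ₀ * (3 * P * t)) :=
        mul_le_mul e1 e2 (by positivity) (by positivity)
      have e4 : ν₀ * (3 * P * t) * (P + κ₀ * (3 * P * t))
          = 3 * t * ν₀ * P ^ 2 + 9 * t ^ 2 * ν₀ * κ₀ * P ^ 2 := by ring
      have e5 : G * (κ₀ * ‖ξ t - xs‖) ≤ G * (κ₀ * (3 * P * t)) := by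
        apply mul_le_mul_of_nonneg_left _ hG
        exact mul_le_mul_of_nonneg_left hd hκ₀
      have e6 : G * (κ₀ * (3 * P * t)) = 3 * t * κ₀ * (G * P) := by ring
      rw [← e4, ← e6]
      linarith [e3, e5]
    have hfinal : 3 * t * ν₀ * P ^ 2 + 9 * t ^ 2 * ν₀ * κ₀ * P ^ 2
        + 3 * t * κ₀ * (G * P) ≤ t * C₁ * W' := by
      have hMW : P ^ 2 ≤ M₀ * W' := hQ1
      have hMW2 : G * P ≤ M₀ * W' := hQ2
      have h1 : 3 * t * ν₀ * P ^ 2 ≤ 3 * t * ν₀ * (M₀ * W') :=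
        mul_le_mul_of_nonneg_left hMW (by positivity)
      have ht2 : t ^ 2 ≤ t := by
        have := mul_le_mul_of_nonneg_left htle1 ht1
        calc t ^ 2 = t * t := sq t
          _ ≤ t * 1 := this
          _ = t := mul_one t
      have h2 : 9 * t ^ 2 * ν₀ * κ₀ * P ^ 2 ≤ 9 * t * ν₀ * κ₀ * (M₀ * W') := by
        have hb : 9 * t ^ 2 * ν₀ * κ₀ * P ^ 2 ≤ 9 * t * ν₀ * κ₀ * P ^ 2 := by
          apply mul_le_mul_of_nonneg_right _ (sq_nonneg P)
          calc 9 * t ^ 2 * ν₀ * κ₀ = 9 * ν₀ * κ₀ * t ^ 2 := by ring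
            _ ≤ 9 * ν₀ * κ₀ * t := mul_le_mul_of_nonneg_left ht2 (by positivity)
            _ = 9 * t * ν₀ * κ₀ := by ring
        exact le_trans hb (mul_le_mul_of_nonneg_left hMW (by positivity))
      have h3 : 3 * t * κ₀ * (G * P) ≤ 3 * t * κ₀ * (M₀ * W') :=
        mul_le_mul_of_nonneg_left hMW2 (by positivity)
      have hrhs : t * (3 * M₀ * (ν₀ + 3 * ν₀ * κ₀ + κ₀)) * W'
          = 3 * t * ν₀ * (M₀ * W') + 9 * t * ν₀ * κ₀ * (M₀ * W') + 3 * t * κ₀ * (M₀ * W') := by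
        ring
      rw [← hC₁def, hrhs]
      linarith [add_le_add (add_le_add h1 h2) h3]
    have hlast : t * C₁ * W' ≤ (1 - σ) / 4 * W' := by
      apply mul_le_mul_of_nonneg_right _ (le_of_lt hW')
      calc t * C₁ ≤ T * C₁ := mul_le_mul_of_nonneg_right htT hC₁
        _ ≤ (1 - σ) / 4 := hTC₁
    exact le_trans habs (le_trans hstep (le_trans hfinal hlast))
  -- derivative of V along the solution
  have hgrad : ∀ x : EuclideanSpace ℝ (Fin d), HasFDerivAt V
      ((InnerProductSpace.toDual ℝ (EuclideanSpace ℝ (Fin d))) (gradient V x)) x :=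
    fun x => hasGradientAt_iff_hasFDerivAt.mp (hV.differentiable one_ne_zero x).hasGradientAt
  have hvd : ∀ t ∈ Icc (0 : ℝ) T,
      HasDerivWithinAt (fun s => V (ξ s)) (⟪gradient V (ξ t), ft (ξ t)⟫_ℝ) (Icc (0 : ℝ) T) t := by
    intro t ht
    have hcomp := (hgrad (ξ t)).comp_hasDerivWithinAt t (hξd t ht)
    rw [InnerProductSpace.toDual_apply_apply] at hcomp
    exact hcomp
  -- invariance of the sublevel set
  have hinv : ∀ t ∈ Icc (0 : ℝ) T, V (ξ t) ≤ V xs := by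
    set A : Set ℝ := {t | t ∈ Icc (0:ℝ) T ∧ ∀ s ∈ Icc (0:ℝ) t, V (ξ s) ≤ V xs} with hAdef
    have h0A : (0:ℝ) ∈ A := by
      refine ⟨⟨le_rfl, le_of_lt hT0⟩, fun s hs => ?_⟩
      have hs0 : s = 0 := le_antisymm hs.2 hs.1
      rw [hs0, hξ0]
    have hAne : A.Nonempty := ⟨0, h0A⟩
    have hAbdd : BddAbove A := ⟨T, fun a ha => ha.1.2⟩
    set t₀ := sSup A with ht₀def
    have ht₀mem : t₀ ∈ Icc (0:ℝ) T := ⟨le_csSup hAbdd h0A, csSup_le hAne fun a ha => ha.1.2⟩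
    have hltcase : ∀ u : ℝ, 0 ≤ u → u < t₀ → V (ξ u) ≤ V xs := by
      intro u hu0 hut
      obtain ⟨a, haA, hua⟩ := exists_lt_of_lt_csSup hAne hut
      exact haA.2 u ⟨hu0, le_of_lt hua⟩
    have ht₀A : t₀ ∈ A := by
      refine ⟨ht₀mem, fun s hs => ?_⟩
      rcases lt_or_eq_of_le hs.2 with hlt | heq
      · exact hltcase s hs.1 hlt
      · rw [heq]
        rcases eq_or_lt_of_le ht₀mem.1 with h0 | h0
        · rw [← h0, hξ0]
        · have hsub : Ico (0:ℝ) t₀ ⊆ Icc (0:ℝ) T :=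
            fun u hu => ⟨hu.1, le_trans (le_of_lt hu.2) ht₀mem.2⟩
          have hvC : ContinuousOn (fun u => V (ξ u)) (Icc 0 T) :=
            hV.continuous.comp_continuousOn hξcont
          have hcw : ContinuousWithinAt (fun u => V (ξ u)) (Ico 0 t₀) t₀ :=
            (hvC t₀ ht₀mem).mono hsub
          have hclos : t₀ ∈ closure (Ico (0:ℝ) t₀) := by
            rw [closure_Ico (ne_of_lt h0)]
            exact ⟨le_of_lt h0, le_rfl⟩
          haveI : (𝓝[Ico (0:ℝ) t₀] t₀).NeBot := mem_closure_iff_nhdsWithin_neBot.mp hclos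
          apply le_of_tendsto hcw
          filter_upwards [self_mem_nhdsWithin] with u hu
          exact hltcase u hu.1 hu.2
    have ht₀T : t₀ = T := by
      by_contra hne
      have hltT : t₀ < T := lt_of_le_of_ne ht₀mem.2 hne
      have hBt₀ : V (ξ t₀) ≤ V xs := ht₀A.2 t₀ ⟨ht₀mem.1, le_rfl⟩
      have hfteq' : ft (ξ t₀) = f (ξ t₀) := (hfteq hBt₀).symm
      have hD := hvd t₀ ht₀mem
      rw [hfteq'] at hD
      have hDneg : ⟪gradient V (ξ t₀), f (ξ t₀)⟫_ℝ < 0 := by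
        have habs := (abs_le.mp (hWest t₀ ht₀mem hBt₀)).2
        have hlt : (1 - σ)/4 * W' < 1 * W' :=
          mul_lt_mul_of_pos_right (by linarith) hW'
        linarith
      have hslope := hasDerivWithinAt_iff_tendsto_slope.mp hD
      have hsub2 : Ioc t₀ T ⊆ (Icc (0:ℝ) T) \ {t₀} := fun u hu =>
        ⟨⟨le_trans ht₀mem.1 (le_of_lt hu.1), hu.2⟩, ne_of_gt hu.1⟩
      have hslope2 : Tendsto (slope (fun s => V (ξ s)) t₀) (𝓝[Ioc t₀ T] t₀)
          (𝓝 (⟪gradient V (ξ t₀), f (ξ t₀)⟫_ℝ)) :=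
        hslope.mono_left (nhdsWithin_mono _ hsub2)
      have hev : ∀ᶠ u in 𝓝[Ioc t₀ T] t₀, slope (fun s => V (ξ s)) t₀ u < 0 :=
        hslope2.eventually (eventually_lt_nhds hDneg)
      obtain ⟨δ, hδpos, hδ⟩ := Metric.mem_nhdsWithin_iff.mp hev
      set t' := min T (t₀ + δ/2) with ht'def
      have ht'gt : t₀ < t' := lt_min hltT (by linarith)
      have ht'A : t' ∈ A := by
        refine ⟨⟨le_trans ht₀mem.1 (le_of_lt ht'gt), min_le_left _ _⟩, fun s hs => ?_⟩
        rcases le_or_gt s t₀ with hle | hgt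
        · exact ht₀A.2 s ⟨hs.1, hle⟩
        · have hsT : s ≤ T := le_trans hs.2 (min_le_left _ _)
          have hball : s ∈ ball t₀ δ := by
            rw [mem_ball, Real.dist_eq, abs_of_pos (by linarith : (0:ℝ) < s - t₀)]
            have : s ≤ t₀ + δ/2 := le_trans hs.2 (min_le_right _ _)
            linarith
          have hsl : slope (fun u => V (ξ u)) t₀ s < 0 := hδ ⟨hball, ⟨hgt, hsT⟩⟩
          rw [slope_def_field] at hsl
          have hspos : (0:ℝ) < s - t₀ := by linarith
          have hdiv := (div_lt_iff₀ hspos).mp hsl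
          rw [zero_mul] at hdiv
          have hVlt : V (ξ s) < V (ξ t₀) := by linarith
          linarith [hBt₀]
      have hle : t' ≤ t₀ := le_csSup hAbdd ht'A
      exact absurd hle (not_le.mpr ht'gt)
    intro t ht
    exact ht₀A.2 t (by rw [ht₀T]; exact ht)
  -- conclusions
  refine ⟨ξ, hξ0, fun t ht => ?_, fun t ht => ?_⟩
  · rw [hfteq (hinv t ht)]
    exact hξd t ht
  · have htIcc : t ∈ Icc (0:ℝ) T := ⟨ht.1, le_of_lt ht.2⟩
    have hBt : V (ξ t) ≤ V xs := hinv t htIcc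
    have hWup : ⟪gradient V (ξ t), f (ξ t)⟫_ℝ ≤ W₀ + (1-σ)/4 * W' := by
      have h := (abs_le.mp (hWest t htIcc hBt)).2
      linarith
    -- bound on |V (ξ t) - V xs|
    have hΔv : |V (ξ t) - V xs| ≤ 2 * W' * t := by
      have hsubt : Icc (0:ℝ) t ⊆ Icc (0:ℝ) T := Icc_subset_Icc le_rfl htIcc.2
      have hd' : ∀ s ∈ Icc (0:ℝ) t, HasDerivWithinAt (fun u => V (ξ u))
          (⟪gradient V (ξ s), ft (ξ s)⟫_ℝ) (Icc (0:ℝ) t) s :=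
        fun s hs => (hvd s (hsubt hs)).mono hsubt
      have hb' : ∀ s ∈ Ico (0:ℝ) t, ‖⟪gradient V (ξ s), ft (ξ s)⟫_ℝ‖ ≤ 2 * W' := by
        intro s hs
        have hsIcc : s ∈ Icc (0:ℝ) T := ⟨hs.1, le_trans (le_of_lt hs.2) htIcc.2⟩
        have hBs : V (ξ s) ≤ V xs := hinv s hsIcc
        have habs := abs_le.mp (hWest s hsIcc hBs)
        rw [← hfteq hBs, Real.norm_eq_abs, abs_le]
        have hq : (1 - σ)/4 * W' ≤ 1 * W' :=
          mul_le_mul_of_nonneg_right (by linarith) (le_of_lt hW')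
        constructor <;> linarith [habs.1, habs.2]
      have hseg := norm_image_sub_le_of_norm_deriv_le_segment' hd' hb' t
        (right_mem_Icc.mpr ht.1)
      rw [hξ0, sub_zero, Real.norm_eq_abs] at hseg
      exact hseg
    have hvt0 : 0 ≤ V (ξ t) := hVnn _
    have hγle : γ (V (ξ t)) ≤ γ (V xs) + L₀ * (V xs - V (ξ t)) := hγcmp _ ⟨hvt0, hBt⟩
    have hVd : V xs - V (ξ t) ≤ 2 * W' * t := by
      have := (abs_le.mp hΔv).1; linarith
    have hVd0 : 0 ≤ V xs - V (ξ t) := by linarith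
    have hterm : σ * (L₀ * (V xs - V (ξ t))) ≤ (1-σ)/4 * W' := by
      have h1 : σ * L₀ * (V xs - V (ξ t)) ≤ σ * L₀ * (2 * W' * t) :=
        mul_le_mul_of_nonneg_left hVd (by positivity)
      have h3 : t * (2 * σ * L₀) ≤ (1-σ)/4 :=
        le_trans (mul_le_mul_of_nonneg_right htIcc.2 (by positivity)) hTL
      have h4 := mul_le_mul_of_nonneg_right h3 (le_of_lt hW')
      calc σ * (L₀ * (V xs - V (ξ t))) = σ * L₀ * (V xs - V (ξ t)) := by ring
        _ ≤ σ * L₀ * (2 * W' * t) := h1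
        _ = t * (2 * σ * L₀) * W' := by ring
        _ ≤ (1-σ)/4 * W' := h4
    have hγW : γ (V xs) ≤ W' := by linarith [hW₀, hW'W.symm.le, hW'W.le]
    have hA1 : σ * γ (V (ξ t)) ≤ σ * (γ (V xs) + L₀ * (V xs - V (ξ t))) :=
      mul_le_mul_of_nonneg_left hγle (le_of_lt hσ0)
    have hA2 : σ * γ (V xs) ≤ σ * W' := mul_le_mul_of_nonneg_left hγW (le_of_lt hσ0)
    have hposs : 0 < (1 - σ) * W' := mul_pos (by linarith) hW'
    have h5 : σ * γ (V (ξ t)) ≤ σ * W' + (1-σ)/4 * W' := by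
      have := hA1.trans_eq (by ring :
        σ * (γ (V xs) + L₀ * (V xs - V (ξ t)))
          = σ * γ (V xs) + σ * (L₀ * (V xs - V (ξ t))))
      linarith [hA2, hterm]
    have h6 : ⟪gradient V (ξ t), f (ξ t)⟫_ℝ ≤ -W' + (1-σ)/4 * W' := by
      rw [hW'W] at hWup
      linarith
    linarith [h5, h6, hposs]

section TauDef

open Classical in
/-- The uniform time function. -/
noncomputable def tau (d : ℕ) (V : EuclideanSpace ℝ (Fin d) → ℝ) (γ : ℝ → ℝ) (σ : ℝ)
    (κ M : EuclideanSpace ℝ (Fin d) → ℝ) (xs : EuclideanSpace ℝ (Fin d)) : ℝ :=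
  min (((lipschitzExtensionConstant (EuclideanSpace ℝ (Fin d)) : ℝ) * max (κ xs) 0 + 1)⁻¹)
    ((1 - σ) / 4 / (3 * M xs * (lipConst (gradient V) {x | V x ≤ V xs}
      + 3 * lipConst (gradient V) {x | V x ≤ V xs} * max (κ xs) 0 + max (κ xs) 0)
      + 2 * σ * (if MonotoneOn γ (Ici (0:ℝ)) then 0 else lipConst γ (Icc 0 (V xs))) + 1))

end TauDef

/-- Key Lemma, local version. Under Assumptions 1–4' and `γ` non-decreasing
or `C¹`, there exists `τ : ℝ^d → (0,∞)`, uniformly positive on every compact set, such that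
for every `x* ≠ 0` the solution of `ξ' = F(ξ, 𝒰(x*))`, `ξ(0) = x*`, exists on `[0, τ(x*)]`
and satisfies `W(ξ(t), 𝒰(x*)) < -σ·γ(V(ξ(t)))` for `t ∈ [0, τ(x*))`. -/
theorem statement2
    (d m : ℕ)
    (F : EuclideanSpace ℝ (Fin d) → EuclideanSpace ℝ (Fin m) → EuclideanSpace ℝ (Fin d))
    (U : Set (EuclideanSpace ℝ (Fin m)))
    (𝒰 : EuclideanSpace ℝ (Fin d) → EuclideanSpace ℝ (Fin m))
    (V : EuclideanSpace ℝ (Fin d) → ℝ) (γ : ℝ → ℝ) (σ : ℝ)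
    (hσ0 : 0 < σ) (hσ1 : σ < 1)
    (hγc : Continuous γ) (hγpos : ∀ v : ℝ, 0 < v → 0 < γ v)
    (hV : ContDiff ℝ 1 V) (hV0 : V 0 = 0) (hVpos : ∀ x, x ≠ 0 → 0 < V x)
    (hVrad : ∀ c : ℝ, ∃ R : ℝ, ∀ x : EuclideanSpace ℝ (Fin d), R ≤ ‖x‖ → c ≤ V x)
    (h𝒰U : ∀ x, 𝒰 x ∈ U)
    (hfeed : ∀ x, x ≠ 0 → ⟪gradient V x, F x (𝒰 x)⟫_ℝ ≤ -γ (V x))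
    -- Assumption 1: local Lipschitz continuity of `F(·,u)` for all `u ∈ U`
    (hF : ∀ u ∈ U, LocallyLipschitz (fun x => F x u))
    -- Assumption 2: the Lipschitz constant `κ(x*)` of `F(·,𝒰(x*))` on `B(x*)` is bounded
    -- on every compact set
    (κ : EuclideanSpace ℝ (Fin d) → ℝ)
    (hκlip : ∀ xs x1 x2 : EuclideanSpace ℝ (Fin d), V x1 ≤ V xs → V x2 ≤ V xs →
      ‖F x1 (𝒰 xs) - F x2 (𝒰 xs)‖ ≤ κ xs * ‖x1 - x2‖)
    (hκbdd : ∀ K : Set (EuclideanSpace ℝ (Fin d)), IsCompact K → ∃ C : ℝ, ∀ x ∈ K, κ x ≤ C)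
    -- Assumption 3: the gradient of `V` is locally Lipschitz
    (hgradlip : LocallyLipschitz (gradient V))
    -- Assumption 4': non-degeneracy with a locally bounded `M`
    (M : EuclideanSpace ℝ (Fin d) → ℝ) (hMpos : ∀ x, 0 < M x)
    (hMbdd : ∀ K : Set (EuclideanSpace ℝ (Fin d)), IsCompact K → ∃ C : ℝ, ∀ x ∈ K, M x ≤ C)
    (hMineq : ∀ x, ‖gradient V x‖ * ‖F x (𝒰 x)‖ + ‖F x (𝒰 x)‖ ^ 2 ≤
      M x * |⟪gradient V x, F x (𝒰 x)⟫_ℝ|)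
    -- `γ` is either non-decreasing on `[0,∞)` or `C¹`
    (hγreg : MonotoneOn γ (Ici (0 : ℝ)) ∨ ContDiff ℝ 1 γ) :
    ∃ τ : EuclideanSpace ℝ (Fin d) → ℝ,
      (∀ x, 0 < τ x) ∧
      (∀ K : Set (EuclideanSpace ℝ (Fin d)), IsCompact K → ∃ ε > (0 : ℝ), ∀ x ∈ K, ε ≤ τ x) ∧
      (∀ xs : EuclideanSpace ℝ (Fin d), xs ≠ 0 →
        ∃ ξ : ℝ → EuclideanSpace ℝ (Fin d), ξ 0 = xs ∧
          (∀ t ∈ Icc (0 : ℝ) (τ xs),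
            HasDerivWithinAt ξ (F (ξ t) (𝒰 xs)) (Icc (0 : ℝ) (τ xs)) t) ∧
          (∀ t ∈ Ico (0 : ℝ) (τ xs),
            ⟪gradient V (ξ t), F (ξ t) (𝒰 xs)⟫_ℝ < -σ * γ (V (ξ t)))) := by
  classical
  have hVc : Continuous V := hV.continuous
  have hVnn : ∀ x, 0 ≤ V x := by
    intro x
    rcases eq_or_ne x 0 with rfl | h
    · rw [hV0]
    · exact (hVpos x h).le
  -- sublevel sets are compact
  have hsub : ∀ s : ℝ, IsCompact {x : EuclideanSpace ℝ (Fin d) | V x ≤ s} := by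
    intro s
    obtain ⟨R, hR⟩ := hVrad (s + 1)
    have hclosed : IsClosed {x : EuclideanSpace ℝ (Fin d) | V x ≤ s} :=
      isClosed_le hVc continuous_const
    have hbdd : Bornology.IsBounded {x : EuclideanSpace ℝ (Fin d) | V x ≤ s} := by
      apply Bornology.IsBounded.subset (Metric.isBounded_closedBall (x := (0 : EuclideanSpace ℝ (Fin d))) (r := max R 0))
      intro x hx
      rw [mem_closedBall, dist_zero_right]
      by_contra hc
      push_neg at hc
      have h1 : R ≤ ‖x‖ := le_trans (le_max_left _ _) hc.le
      have h2 := hR x h1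
      simp only [mem_setOf_eq] at hx
      linarith
    exact Metric.isCompact_of_isClosed_isBounded hclosed hbdd
  -- abbreviations
  set eC : ℝ := (lipschitzExtensionConstant (EuclideanSpace ℝ (Fin d)) : ℝ) with heCdef
  have heC : 0 ≤ eC := (lipschitzExtensionConstant (EuclideanSpace ℝ (Fin d))).coe_nonneg
  have hκ₀ : ∀ xs, (0:ℝ) ≤ max (κ xs) 0 := fun xs => le_max_right _ _
  have hν₀ : ∀ xs : EuclideanSpace ℝ (Fin d),
      0 ≤ lipConst (gradient V) {x | V x ≤ V xs} := fun xs => lipConst_nonneg _ _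
  have hL₀ : ∀ xs : EuclideanSpace ℝ (Fin d),
      0 ≤ (if MonotoneOn γ (Ici (0:ℝ)) then 0 else lipConst γ (Icc 0 (V xs))) := by
    intro xs
    split
    · exact le_rfl
    · exact lipConst_nonneg _ _
  have hτpos : ∀ xs, 0 < tau d V γ σ κ M xs := by
    intro xs
    apply lt_min
    · have := hκ₀ xs
      positivity
    · apply div_pos (by linarith)
      have h1 := hν₀ xs
      have h2 := hκ₀ xs
      have h3 := hL₀ xs
      have h4 := hMpos xs
      positivity
  refine ⟨tau d V γ σ κ M, hτpos, ?_, ?_⟩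
  · -- uniform positivity on compact sets
    intro K hK
    rcases K.eq_empty_or_nonempty with rfl | hne
    · exact ⟨1, one_pos, by simp⟩
    obtain ⟨z, hzK, hzmax'⟩ := hK.exists_isMaxOn hne hVc.continuousOn
    have hzmax : ∀ x ∈ K, V x ≤ V z := fun x hx => hzmax' hx
    obtain ⟨Cκ, hCκ⟩ := hκbdd K hK
    obtain ⟨CM, hCM⟩ := hMbdd K hK
    obtain ⟨Cg, hCg0, hCg⟩ := locallyLipschitz_compact_bound hgradlip (hsub (V z))
    have hbS : BddAbove (ratioSet (gradient V) {x | V x ≤ V z}) := bddAbove_ratioSet hCg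
    set νb : ℝ := lipConst (gradient V) {x | V x ≤ V z} with hνbdef
    have hνb0 : 0 ≤ νb := lipConst_nonneg _ _
    have hνb : ∀ xs ∈ K, lipConst (gradient V) {x | V x ≤ V xs} ≤ νb := by
      intro xs hxs
      apply lipConst_mono _ hbS
      intro x hx
      exact le_trans hx (hzmax xs hxs)
    set κb : ℝ := max Cκ 0 with hκbdef
    have hκb0 : 0 ≤ κb := le_max_right _ _
    have hκb : ∀ xs ∈ K, max (κ xs) 0 ≤ κb := fun xs hxs =>
      max_le_max (hCκ xs hxs) le_rfl
    set Mb : ℝ := max CM 1 with hMbdef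
    have hMb0 : (0:ℝ) < Mb := lt_of_lt_of_le one_pos (le_max_right _ _)
    have hMb : ∀ xs ∈ K, M xs ≤ Mb := fun xs hxs =>
      le_trans (hCM xs hxs) (le_max_left _ _)
    obtain ⟨Lb, hLb0, hLb⟩ : ∃ Lb : ℝ, 0 ≤ Lb ∧ ∀ xs ∈ K,
        (if MonotoneOn γ (Ici (0:ℝ)) then 0 else lipConst γ (Icc 0 (V xs))) ≤ Lb := by
      by_cases hmono : MonotoneOn γ (Ici (0:ℝ))
      · exact ⟨0, le_rfl, fun xs _ => by rw [if_pos hmono]⟩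
      · have hγ1 : ContDiff ℝ 1 γ := hγreg.resolve_left hmono
        obtain ⟨CL, hCL0, hCL⟩ :=
          locallyLipschitz_compact_bound hγ1.locallyLipschitz (isCompact_Icc (a := (0:ℝ)) (b := V z))
        have hbL : BddAbove (ratioSet γ (Icc 0 (V z))) := bddAbove_ratioSet hCL
        refine ⟨lipConst γ (Icc 0 (V z)), lipConst_nonneg _ _, fun xs hxs => ?_⟩
        rw [if_neg hmono]
        apply lipConst_mono (Icc_subset_Icc le_rfl (hzmax xs hxs)) hbL
    refine ⟨min ((eC * κb + 1)⁻¹)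
      ((1 - σ) / 4 / (3 * Mb * (νb + 3 * νb * κb + κb) + 2 * σ * Lb + 1)), ?_, ?_⟩
    · apply lt_min
      · positivity
      · apply div_pos (by linarith)
        positivity
    · intro xs hxs
      apply min_le_min
      · apply inv_anti₀
        · have := hκ₀ xs; positivity
        · have h := hκb xs hxs
          have := mul_le_mul_of_nonneg_left h heC
          linarith
      · apply div_le_div_of_nonneg_left _ _ _
        · linarith
        · have h1 := hν₀ xs; have h2 := hκ₀ xs; have h3 := hL₀ xs
          have h4 := hMpos xs
          positivity
        · have h1 := hνb xs hxs
          have h2 := hκb xs hxs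
          have h3 := hMb xs hxs
          have h4 := hLb xs hxs
          have n1 := hν₀ xs; have n2 := hκ₀ xs; have n3 := hL₀ xs
          have n4 := (hMpos xs).le
          have m3 : 3 * lipConst (gradient V) {x | V x ≤ V xs} * max (κ xs) 0
              ≤ 3 * νb * κb := by
            apply mul_le_mul (by linarith) h2 n2 (by positivity)
          have mid0 : 0 ≤ lipConst (gradient V) {x | V x ≤ V xs}
              + 3 * lipConst (gradient V) {x | V x ≤ V xs} * max (κ xs) 0 + max (κ xs) 0 := by
            have := mul_nonneg (mul_nonneg (by norm_num : (0:ℝ) ≤ 3) n1) n2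
            linarith
          have e1 : 3 * M xs * (lipConst (gradient V) {x | V x ≤ V xs}
              + 3 * lipConst (gradient V) {x | V x ≤ V xs} * max (κ xs) 0 + max (κ xs) 0)
              ≤ 3 * Mb * (νb + 3 * νb * κb + κb) := by
            apply mul_le_mul (by linarith) (by linarith) mid0 (by positivity)
          have e2 : 2 * σ * (if MonotoneOn γ (Ici (0:ℝ)) then 0
              else lipConst γ (Icc 0 (V xs))) ≤ 2 * σ * Lb :=
            mul_le_mul_of_nonneg_left h4 (by positivity)
          linarith
  · -- the solution and strict decrease
    intro xs hxs
    have hVxs : 0 < V xs := hVpos xs hxs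
    have hγVxs : 0 < γ (V xs) := hγpos _ hVxs
    have hW₀ := hfeed xs hxs
    -- Lipschitz bounds on the sublevel set
    have hfB : ∀ x1, V x1 ≤ V xs → ∀ x2, V x2 ≤ V xs →
        ‖F x1 (𝒰 xs) - F x2 (𝒰 xs)‖ ≤ max (κ xs) 0 * ‖x1 - x2‖ := by
      intro x1 h1 x2 h2
      exact le_trans (hκlip xs x1 x2 h1 h2)
        (mul_le_mul_of_nonneg_right (le_max_left _ _) (norm_nonneg _))
    obtain ⟨Cg, hCg0, hCg⟩ := locallyLipschitz_compact_bound hgradlip (hsub (V xs))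
    have hbS : BddAbove (ratioSet (gradient V) {x | V x ≤ V xs}) := bddAbove_ratioSet hCg
    have hgB : ∀ x1, V x1 ≤ V xs → ∀ x2, V x2 ≤ V xs →
        ‖gradient V x1 - gradient V x2‖
          ≤ lipConst (gradient V) {x | V x ≤ V xs} * ‖x1 - x2‖ := by
      intro x1 h1 x2 h2
      have := lipConst_dist_le hbS (show x1 ∈ {x | V x ≤ V xs} from h1)
        (show x2 ∈ {x | V x ≤ V xs} from h2)
      rwa [dist_eq_norm, dist_eq_norm] at this
    -- assumption 4'
    have habsW : |⟪gradient V xs, F xs (𝒰 xs)⟫_ℝ| = -⟪gradient V xs, F xs (𝒰 xs)⟫_ℝ :=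
      abs_of_neg (by linarith)
    have hMx := hMineq xs
    rw [habsW] at hMx
    have hQ1 : ‖F xs (𝒰 xs)‖ ^ 2 ≤ M xs * (-⟪gradient V xs, F xs (𝒰 xs)⟫_ℝ) := by
      linarith [mul_nonneg (norm_nonneg (gradient V xs)) (norm_nonneg (F xs (𝒰 xs)))]
    have hQ2 : ‖gradient V xs‖ * ‖F xs (𝒰 xs)‖
        ≤ M xs * (-⟪gradient V xs, F xs (𝒰 xs)⟫_ℝ) := by
      linarith [sq_nonneg ‖F xs (𝒰 xs)‖]
    -- the γ comparison
    have hγcmp : ∀ a ∈ Icc (0 : ℝ) (V xs), γ a ≤ γ (V xs)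
        + (if MonotoneOn γ (Ici (0:ℝ)) then 0 else lipConst γ (Icc 0 (V xs)))
          * (V xs - a) := by
      intro a ha
      by_cases hmono : MonotoneOn γ (Ici (0:ℝ))
      · rw [if_pos hmono, zero_mul, add_zero]
        exact hmono (mem_Ici.mpr ha.1) (mem_Ici.mpr hVxs.le) ha.2
      · rw [if_neg hmono]
        have hγ1 : ContDiff ℝ 1 γ := hγreg.resolve_left hmono
        obtain ⟨CL, hCL0, hCL⟩ :=
          locallyLipschitz_compact_bound hγ1.locallyLipschitz (isCompact_Icc (a := (0:ℝ)) (b := V xs))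
        have hbL : BddAbove (ratioSet γ (Icc 0 (V xs))) := bddAbove_ratioSet hCL
        have hd := lipConst_dist_le hbL (show a ∈ Icc (0:ℝ) (V xs) from ha)
          (show V xs ∈ Icc (0:ℝ) (V xs) from ⟨hVxs.le, le_rfl⟩)
        rw [Real.dist_eq, Real.dist_eq,
          abs_of_nonpos (show a - V xs ≤ 0 by linarith [ha.2])] at hd
        linarith [le_abs_self (γ a - γ (V xs)), hd]
    -- time bounds
    have hT0 : 0 < tau d V γ σ κ M xs := hτpos xs
    have hT1 : tau d V γ σ κ M xs * (eC * max (κ xs) 0 + 1) ≤ 1 := by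
      have h1 : tau d V γ σ κ M xs ≤ (eC * max (κ xs) 0 + 1)⁻¹ := min_le_left _ _
      have hpos : (0:ℝ) < eC * max (κ xs) 0 + 1 := by have := hκ₀ xs; positivity
      calc tau d V γ σ κ M xs * (eC * max (κ xs) 0 + 1)
          ≤ (eC * max (κ xs) 0 + 1)⁻¹ * (eC * max (κ xs) 0 + 1) :=
            mul_le_mul_of_nonneg_right h1 hpos.le
        _ = 1 := inv_mul_cancel₀ (ne_of_gt hpos)
    have hTC : tau d V γ σ κ M xs * (3 * M xs * (lipConst (gradient V) {x | V x ≤ V xs}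
        + 3 * lipConst (gradient V) {x | V x ≤ V xs} * max (κ xs) 0 + max (κ xs) 0)
        + 2 * σ * (if MonotoneOn γ (Ici (0:ℝ)) then 0 else lipConst γ (Icc 0 (V xs))))
        ≤ (1 - σ) / 4 := by
      have h1 : tau d V γ σ κ M xs ≤ (1 - σ) / 4 / (3 * M xs
          * (lipConst (gradient V) {x | V x ≤ V xs}
          + 3 * lipConst (gradient V) {x | V x ≤ V xs} * max (κ xs) 0 + max (κ xs) 0)
          + 2 * σ * (if MonotoneOn γ (Ici (0:ℝ)) then 0 else lipConst γ (Icc 0 (V xs))) + 1) :=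
        min_le_right _ _
      have n1 := hν₀ xs; have n2 := hκ₀ xs; have n3 := hL₀ xs; have n4 := hMpos xs
      have hD : (0:ℝ) < 3 * M xs * (lipConst (gradient V) {x | V x ≤ V xs}
          + 3 * lipConst (gradient V) {x | V x ≤ V xs} * max (κ xs) 0 + max (κ xs) 0)
          + 2 * σ * (if MonotoneOn γ (Ici (0:ℝ)) then 0 else lipConst γ (Icc 0 (V xs))) + 1 := by
        positivity
      have h2 := mul_le_mul_of_nonneg_right h1 hD.le
      rw [div_mul_cancel₀ _ (ne_of_gt hD)] at h2
      have he : tau d V γ σ κ M xs * (3 * M xs * (lipConst (gradient V) {x | V x ≤ V xs}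
          + 3 * lipConst (gradient V) {x | V x ≤ V xs} * max (κ xs) 0 + max (κ xs) 0)
          + 2 * σ * (if MonotoneOn γ (Ici (0:ℝ)) then 0 else lipConst γ (Icc 0 (V xs))) + 1)
          = tau d V γ σ κ M xs * (3 * M xs * (lipConst (gradient V) {x | V x ≤ V xs}
          + 3 * lipConst (gradient V) {x | V x ≤ V xs} * max (κ xs) 0 + max (κ xs) 0)
          + 2 * σ * (if MonotoneOn γ (Ici (0:ℝ)) then 0 else lipConst γ (Icc 0 (V xs))))
          + tau d V γ σ κ M xs := by ring
      linarith [hT0.le]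
    obtain ⟨ξ, hξ0, hξd, hξlt⟩ := key V hV γ σ hσ0 hσ1 (fun x => F x (𝒰 xs)) xs
      hVxs hVnn hW₀ hγVxs
      (max (κ xs) 0) (lipConst (gradient V) {x | V x ≤ V xs})
      (if MonotoneOn γ (Ici (0:ℝ)) then 0 else lipConst γ (Icc 0 (V xs))) (M xs)
      (hκ₀ xs) (hν₀ xs) (hL₀ xs) (hMpos xs)
      hfB hgB hQ1 hQ2 hγcmp
      (tau d V γ σ κ M xs) hT0 hT1 hTC
    exact ⟨ξ, hξ0, hξd, hξlt⟩
end

section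
/- (Global dwell-time positivity.) Let Assumptions 1–4' hold, and suppose that κ, ν and M are globally bounded on ℝ^d, γ is C¹, and inf_{v ≥ 0} γ'(v) > -∞. Then there exists ε > 0, independent of the initial condition, such that: for every continuous x : [0,T) → ℝ^d and every sequence of sampling instants t_0 = 0 < t_1 < t_2 < … such that for each n one has x(t_n) ≠ 0, x'(t) = F(x(t), 𝒰(x(t_n))) on [t_n, t_{n+1}), W(x(t), 𝒰(x(t_n))) ≤ -σ·γ(V(x(t))) for all t ∈ [t_n, t_{n+1}], and W(x(t_{n+1}), 𝒰(x(t_n))) = -σ·γ(V(x(t_{n+1}))), one has t_{n+1} − t_n ≥ ε for all n. -/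
open Set Filter Topology
open scoped InnerProductSpace

private lemma exp_sub_one_le_aux (y : ℝ) (hy : 0 ≤ y) :
    Real.exp y - 1 ≤ y * Real.exp y := by
  have h1 : -y + 1 ≤ Real.exp (-y) := Real.add_one_le_exp (-y)
  rw [Real.exp_neg] at h1
  have h2 : Real.exp y * (Real.exp y)⁻¹ = 1 := mul_inv_cancel₀ (ne_of_gt (Real.exp_pos y))
  nlinarith [Real.exp_pos y]

set_option maxHeartbeats 2000000 in
/-- Global dwell-time positivity. Under Assumptions 1–4' with `κ`, `ν`, `M`
globally bounded, `γ ∈ C¹` and `inf_{v≥0} γ'(v) > -∞`, there is `ε > 0` independent of the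
initial condition, such that every trajectory of the event-triggered algorithm has
inter-sampling times `t_{n+1} - t_n ≥ ε`. -/
theorem statement5
    (d m : ℕ)
    (F : EuclideanSpace ℝ (Fin d) → EuclideanSpace ℝ (Fin m) → EuclideanSpace ℝ (Fin d))
    (U : Set (EuclideanSpace ℝ (Fin m)))
    (𝒰 : EuclideanSpace ℝ (Fin d) → EuclideanSpace ℝ (Fin m))
    (V : EuclideanSpace ℝ (Fin d) → ℝ) (γ : ℝ → ℝ) (σ : ℝ)
    (hσ0 : 0 < σ) (hσ1 : σ < 1)
    (hγc : Continuous γ) (hγpos : ∀ v : ℝ, 0 < v → 0 < γ v)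
    (hV : ContDiff ℝ 1 V) (hV0 : V 0 = 0) (hVpos : ∀ x, x ≠ 0 → 0 < V x)
    (hVrad : ∀ c : ℝ, ∃ R : ℝ, ∀ x : EuclideanSpace ℝ (Fin d), R ≤ ‖x‖ → c ≤ V x)
    (h𝒰U : ∀ x, 𝒰 x ∈ U)
    (hfeed : ∀ x, x ≠ 0 → ⟪gradient V x, F x (𝒰 x)⟫_ℝ ≤ -γ (V x))
    -- Assumption 1
    (hF : ∀ u ∈ U, LocallyLipschitz (fun x => F x u))
    -- Assumption 2, with `κ` globally bounded
    (κ : EuclideanSpace ℝ (Fin d) → ℝ)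
    (hκlip : ∀ xs x1 x2 : EuclideanSpace ℝ (Fin d), V x1 ≤ V xs → V x2 ≤ V xs →
      ‖F x1 (𝒰 xs) - F x2 (𝒰 xs)‖ ≤ κ xs * ‖x1 - x2‖)
    (hκglob : ∃ C : ℝ, ∀ x, κ x ≤ C)
    -- Assumption 3, with `ν` globally bounded
    (hgradlip : LocallyLipschitz (gradient V))
    (ν : EuclideanSpace ℝ (Fin d) → ℝ)
    (hνlip : ∀ xs x1 x2 : EuclideanSpace ℝ (Fin d), V x1 ≤ V xs → V x2 ≤ V xs →
      ‖gradient V x1 - gradient V x2‖ ≤ ν xs * ‖x1 - x2‖)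
    (hνglob : ∃ C : ℝ, ∀ x, ν x ≤ C)
    -- Assumption 4', with `M` globally bounded
    (M : EuclideanSpace ℝ (Fin d) → ℝ) (hMpos : ∀ x, 0 < M x)
    (hMglob : ∃ C : ℝ, ∀ x, M x ≤ C)
    (hMineq : ∀ x, ‖gradient V x‖ * ‖F x (𝒰 x)‖ + ‖F x (𝒰 x)‖ ^ 2 ≤
      M x * |⟪gradient V x, F x (𝒰 x)⟫_ℝ|)
    -- `γ` is `C¹` with derivative bounded below on `[0,∞)`
    (hγ1 : ContDiff ℝ 1 γ)
    (hγ' : ∃ c : ℝ, ∀ v : ℝ, 0 ≤ v → c ≤ deriv γ v) :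
    ∃ ε > (0 : ℝ),
      ∀ (T : ℝ) (x : ℝ → EuclideanSpace ℝ (Fin d)) (ts : ℕ → ℝ),
        ContinuousOn x (Ico (0 : ℝ) T) →
        ts 0 = 0 → StrictMono ts → (∀ n : ℕ, ts (n + 1) < T) →
        (∀ n : ℕ, x (ts n) ≠ 0) →
        (∀ n : ℕ, ∀ s ∈ Ico (ts n) (ts (n + 1)),
          HasDerivWithinAt x (F (x s) (𝒰 (x (ts n)))) (Ico (ts n) (ts (n + 1))) s) →
        (∀ n : ℕ, ∀ s ∈ Icc (ts n) (ts (n + 1)),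
          ⟪gradient V (x s), F (x s) (𝒰 (x (ts n)))⟫_ℝ ≤ -σ * γ (V (x s))) →
        (∀ n : ℕ, ⟪gradient V (x (ts (n + 1))), F (x (ts (n + 1))) (𝒰 (x (ts n)))⟫_ℝ =
          -σ * γ (V (x (ts (n + 1))))) →
        ∀ n : ℕ, ε ≤ ts (n + 1) - ts n := by
  classical
  obtain ⟨Cκ, hCκ⟩ := hκglob
  obtain ⟨Cν, hCν⟩ := hνglob
  obtain ⟨CM, hCM⟩ := hMglob
  obtain ⟨c, hc⟩ := hγ'
  -- global constants
  set κb : ℝ := max Cκ 1 with hκb_def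
  set νb : ℝ := max Cν 0 with hνb_def
  set Mb : ℝ := max CM 1 with hMb_def
  set cb : ℝ := max (-c) 0 with hcb_def
  set A : ℝ := Real.exp κb with hA_def
  have hκb1 : (1 : ℝ) ≤ κb := le_max_right _ _
  have hκb0 : (0 : ℝ) < κb := lt_of_lt_of_le one_pos hκb1
  have hνb0 : (0 : ℝ) ≤ νb := le_max_right _ _
  have hMb1 : (1 : ℝ) ≤ Mb := le_max_right _ _
  have hMb0 : (0 : ℝ) ≤ Mb := le_trans zero_le_one hMb1
  have hcb0 : (0 : ℝ) ≤ cb := le_max_right _ _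
  have hA1 : (1 : ℝ) ≤ A := by
    rw [hA_def]
    calc (1 : ℝ) = Real.exp 0 := by rw [Real.exp_zero]
    _ ≤ Real.exp κb := Real.exp_le_exp.2 hκb0.le
  have hA0 : (0 : ℝ) ≤ A := le_trans zero_le_one hA1
  set C₁ : ℝ := (νb * A * (1 + κb * A) + κb * A) * Mb with hC₁_def
  have hC₁0 : (0 : ℝ) ≤ C₁ := by positivity
  set C₂ : ℝ := C₁ + σ * cb * (1 + C₁) with hC₂_def
  have hC₂0 : (0 : ℝ) ≤ C₂ := by positivity
  have hσ1' : (0 : ℝ) < 1 - σ := by linarith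
  set ε : ℝ := min 1 ((1 - σ) / (C₂ + 1)) with hε_def
  have hεpos : 0 < ε := lt_min one_pos (by positivity)
  -- nonnegativity of V
  have hVnn : ∀ y, 0 ≤ V y := by
    intro y
    by_cases hy : y = 0
    · rw [hy, hV0]
    · exact (hVpos y hy).le
  -- nonnegativity of γ on [0, ∞)
  have hγnn : ∀ v : ℝ, 0 ≤ v → 0 ≤ γ v := by
    intro v hv
    rcases hv.eq_or_lt with h | h
    · have ht : Tendsto γ (𝓝[>] (0 : ℝ)) (𝓝 (γ 0)) :=
        (hγc.tendsto 0).mono_left nhdsWithin_le_nhds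
      have hev : ∀ᶠ s in 𝓝[>] (0 : ℝ), 0 ≤ γ s := by
        filter_upwards [self_mem_nhdsWithin] with s hs
        exact (hγpos s hs).le
      rw [← h]
      exact ge_of_tendsto ht hev
    · exact (hγpos v h).le
  refine ⟨ε, hεpos, ?_⟩
  intro T x ts hxc hts0 htsm htsT hne hde hW htrig n
  by_contra hcon
  push_neg at hcon
  set a : ℝ := ts n with ha_def
  set b : ℝ := ts (n + 1) with hb_def
  set τ : ℝ := b - a with hτ_def
  have hab : a < b := htsm (Nat.lt_succ_self n)
  have hτpos : 0 < τ := sub_pos.2 hab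
  have hτ1 : τ ≤ 1 := le_trans hcon.le (min_le_left _ _)
  have hτε : τ < (1 - σ) / (C₂ + 1) := lt_of_lt_of_le hcon (min_le_right _ _)
  have ha0 : 0 ≤ a := by
    rw [ha_def, ← hts0]
    exact htsm.monotone (Nat.zero_le n)
  have hbT : b < T := htsT n
  have hsub : Icc a b ⊆ Ico 0 T := fun t ht => ⟨le_trans ha0 ht.1, lt_of_le_of_lt ht.2 hbT⟩
  have hxcont : ContinuousOn x (Icc a b) := hxc.mono hsub
  set u : EuclideanSpace ℝ (Fin m) := 𝒰 (x a) with hu_def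
  set φ : ℝ → ℝ := fun t => ⟪gradient V (x t), F (x t) u⟫_ℝ with hφ_def
  set ψ : ℝ → ℝ := fun t => V (x t) with hψ_def
  -- derivative facts
  have hVg : ∀ y, HasFDerivAt V (InnerProductSpace.toDual ℝ _ (gradient V y)) y := by
    intro y
    have : DifferentiableAt ℝ V y := (hV.differentiable one_ne_zero) y
    have hg := this.hasGradientAt
    exact hg.hasFDerivAt
  have hderiv : ∀ t ∈ Ico a b, HasDerivWithinAt x (F (x t) u) (Ici t) t := by
    intro t ht
    have h1 := hde n t ht
    refine h1.mono_of_mem_nhdsWithin ?_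
    rw [mem_nhdsWithin]
    exact ⟨Iio b, isOpen_Iio, ht.2, fun s hs => ⟨le_trans ht.1 hs.2, hs.1⟩⟩
  have hderivInt : ∀ t ∈ Ioo a b, HasDerivAt x (F (x t) u) t := by
    intro t ht
    have h1 := hde n t ⟨ht.1.le, ht.2⟩
    exact h1.hasDerivAt (mem_nhds_iff.2 ⟨Ioo a b, fun s hs => ⟨hs.1.le, hs.2⟩, isOpen_Ioo, ht⟩)
  have hψd : ∀ t ∈ Ico a b, HasDerivWithinAt ψ (φ t) (Ici t) t := by
    intro t ht
    have := (hVg (x t)).comp_hasDerivWithinAt t (hderiv t ht)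
    simp [hψ_def, hφ_def, InnerProductSpace.toDual_apply_apply, Function.comp] at this ⊢; exact this
  have hψdInt : ∀ t ∈ Ioo a b, HasDerivAt ψ (φ t) t := by
    intro t ht
    have := (hVg (x t)).comp_hasDerivAt t (hderivInt t ht)
    simp [hψ_def, hφ_def, InnerProductSpace.toDual_apply_apply, Function.comp] at this ⊢; exact this
  have hψcont : ContinuousOn ψ (Icc a b) := (hV.continuous.comp_continuousOn hxcont)
  -- φ is nonpositive on [a,b]
  have hφle : ∀ t ∈ Icc a b, φ t ≤ -σ * γ (V (x t)) := fun t ht => hW n t ht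
  have hφnonpos : ∀ t ∈ Icc a b, φ t ≤ 0 := by
    intro t ht
    have h1 := hφle t ht
    have h2 : 0 ≤ γ (V (x t)) := hγnn _ (hVnn _)
    have h3 : 0 ≤ σ * γ (V (x t)) := mul_nonneg hσ0.le h2
    linarith
  -- V decreases along the trajectory
  have hanti : AntitoneOn ψ (Icc a b) := by
    apply antitoneOn_of_deriv_nonpos (convex_Icc a b) hψcont
    · intro t ht
      rw [interior_Icc] at ht
      exact (hψdInt t ht).differentiableAt.differentiableWithinAt
    · intro t ht
      rw [interior_Icc] at ht
      rw [(hψdInt t ht).deriv]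
      exact hφnonpos t ⟨ht.1.le, ht.2.le⟩
  have hB : ∀ t ∈ Icc a b, V (x t) ≤ V (x a) := by
    intro t ht
    exact hanti (left_mem_Icc.2 hab.le) ht ht.1
  -- feedback at the sampling point
  have hxa0 : x a ≠ 0 := hne n
  have hfeeda : φ a ≤ -γ (V (x a)) := hfeed (x a) hxa0
  have hγa : 0 < γ (V (x a)) := hγpos _ (hVpos _ hxa0)
  set w : ℝ := -φ a with hw_def
  have hwγ : γ (V (x a)) ≤ w := by rw [hw_def]; linarith
  have hwpos : 0 < w := lt_of_lt_of_le hγa hwγ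
  have habsφa : |φ a| = w := by rw [hw_def, abs_of_nonpos (by linarith)]
  -- Assumption 4' at the sampling point
  set P : ℝ := ‖F (x a) u‖ with hP_def
  set G : ℝ := ‖gradient V (x a)‖ with hG_def
  have hP0 : 0 ≤ P := norm_nonneg _
  have hG0 : 0 ≤ G := norm_nonneg _
  have hM4 : G * P + P ^ 2 ≤ Mb * w := by
    have h1 := hMineq (x a)
    have h2 : M (x a) ≤ Mb := le_trans (hCM _) (le_max_left _ _)
    have h3 : |⟪gradient V (x a), F (x a) (𝒰 (x a))⟫_ℝ| = w := habsφa
    calc G * P + P ^ 2 ≤ M (x a) * w := by rw [← h3]; exact h1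
    _ ≤ Mb * w := mul_le_mul_of_nonneg_right h2 hwpos.le
  have hFn2 : P ^ 2 ≤ Mb * w := by
    have h1 : 0 ≤ G * P := mul_nonneg hG0 hP0
    linarith
  have hGF : G * P ≤ Mb * w := by
    have h1 : 0 ≤ P ^ 2 := sq_nonneg P
    linarith
  -- Grönwall bound on the error
  set e : ℝ → EuclideanSpace ℝ (Fin d) := fun t => x t - x a with he_def
  have hecont : ContinuousOn e (Icc a b) := hxcont.sub continuousOn_const
  have hed : ∀ t ∈ Ico a b, HasDerivWithinAt e (F (x t) u) (Ici t) t := by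
    intro t ht
    simpa [he_def] using (hderiv t ht).sub_const (x a)
  have hFlip : ∀ t ∈ Icc a b, ‖F (x t) u - F (x a) u‖ ≤ κb * ‖e t‖ := by
    intro t ht
    have h1 := hκlip (x a) (x t) (x a) (hB t ht) le_rfl
    calc ‖F (x t) u - F (x a) u‖ ≤ κ (x a) * ‖x t - x a‖ := h1
    _ ≤ κb * ‖e t‖ := by
        apply mul_le_mul_of_nonneg_right (le_trans (hCκ _) (le_max_left _ _)) (norm_nonneg _)
  have hFbd : ∀ t ∈ Icc a b, ‖F (x t) u‖ ≤ κb * ‖e t‖ + P := by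
    intro t ht
    have h1 := hFlip t ht
    have h0 : F (x t) u = F (x t) u - F (x a) u + F (x a) u := by abel
    calc ‖F (x t) u‖ = ‖F (x t) u - F (x a) u + F (x a) u‖ := by rw [← h0]
    _ ≤ ‖F (x t) u - F (x a) u‖ + ‖F (x a) u‖ := norm_add_le _ _
    _ ≤ κb * ‖e t‖ + P := by rw [hP_def]; linarith
  have hgron : ∀ t ∈ Icc a b, ‖e t‖ ≤ gronwallBound 0 κb P (t - a) := by
    apply norm_le_gronwallBound_of_norm_deriv_right_le hecont hed
    · simp [he_def]
    · intro t ht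
      exact hFbd t ⟨ht.1, ht.2.le⟩
  set E : ℝ := P * τ * A with hE_def
  have hE0 : 0 ≤ E := by positivity
  have hE : ∀ t ∈ Icc a b, ‖e t‖ ≤ E := by
    intro t ht
    have h1 := hgron t ht
    have hs0 : 0 ≤ t - a := sub_nonneg.2 ht.1
    have hsτ : t - a ≤ τ := by rw [hτ_def]; linarith [ht.2]
    have h2 : gronwallBound 0 κb P (t - a) = P / κb * (Real.exp (κb * (t - a)) - 1) := by
      rw [gronwallBound_of_K_ne_0 (ne_of_gt hκb0)]
      ring
    rw [h2] at h1
    have h3 : Real.exp (κb * (t - a)) - 1 ≤ (κb * (t - a)) * Real.exp (κb * (t - a)) :=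
      exp_sub_one_le_aux _ (by positivity)
    have h4 : P / κb * (Real.exp (κb * (t - a)) - 1) ≤
        P / κb * ((κb * (t - a)) * Real.exp (κb * (t - a))) :=
      mul_le_mul_of_nonneg_left h3 (by positivity)
    have h5 : P / κb * ((κb * (t - a)) * Real.exp (κb * (t - a))) =
        P * (t - a) * Real.exp (κb * (t - a)) := by
      field_simp
    have h6 : Real.exp (κb * (t - a)) ≤ A := by
      rw [hA_def]
      apply Real.exp_le_exp.2
      have h8 : κb * (t - a) ≤ κb * 1 :=
        mul_le_mul_of_nonneg_left (le_trans hsτ hτ1) hκb0.le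
      linarith
    have h7 : P * (t - a) * Real.exp (κb * (t - a)) ≤ P * τ * A := by
      apply mul_le_mul (mul_le_mul_of_nonneg_left hsτ hP0) h6 (Real.exp_pos _).le (by positivity)
    rw [hE_def]
    linarith
  -- increment bound on φ
  have hφdiff : ∀ t ∈ Icc a b, |φ t - φ a| ≤ C₁ * w * τ := by
    intro t ht
    have hg1 : ‖gradient V (x t) - gradient V (x a)‖ ≤ νb * E := by
      have h1 := hνlip (x a) (x t) (x a) (hB t ht) le_rfl
      calc ‖gradient V (x t) - gradient V (x a)‖ ≤ ν (x a) * ‖x t - x a‖ := h1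
      _ ≤ νb * ‖e t‖ :=
          mul_le_mul_of_nonneg_right (le_trans (hCν _) (le_max_left _ _)) (norm_nonneg _)
      _ ≤ νb * E := mul_le_mul_of_nonneg_left (hE t ht) hνb0
    have hg2 : ‖F (x t) u‖ ≤ P + κb * E := by
      have h1 := hFbd t ht
      have h2 : κb * ‖e t‖ ≤ κb * E := mul_le_mul_of_nonneg_left (hE t ht) hκb0.le
      linarith
    have hg3 : ‖F (x t) u - F (x a) u‖ ≤ κb * E := by
      have h1 := hFlip t ht
      have h2 : κb * ‖e t‖ ≤ κb * E := mul_le_mul_of_nonneg_left (hE t ht) hκb0.le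
      linarith
    have hsplit : φ t - φ a =
        ⟪gradient V (x t) - gradient V (x a), F (x t) u⟫_ℝ +
        ⟪gradient V (x a), F (x t) u - F (x a) u⟫_ℝ := by
      rw [hφ_def]
      simp only [inner_sub_left, inner_sub_right]
      ring
    have h4 : |φ t - φ a| ≤
        ‖gradient V (x t) - gradient V (x a)‖ * ‖F (x t) u‖ +
        ‖gradient V (x a)‖ * ‖F (x t) u - F (x a) u‖ := by
      rw [hsplit]
      calc |⟪gradient V (x t) - gradient V (x a), F (x t) u⟫_ℝ +
          ⟪gradient V (x a), F (x t) u - F (x a) u⟫_ℝ| ≤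
          |⟪gradient V (x t) - gradient V (x a), F (x t) u⟫_ℝ| +
          |⟪gradient V (x a), F (x t) u - F (x a) u⟫_ℝ| := abs_add_le _ _
      _ ≤ _ := add_le_add (abs_real_inner_le_norm _ _) (abs_real_inner_le_norm _ _)
    have h5 : ‖gradient V (x t) - gradient V (x a)‖ * ‖F (x t) u‖ ≤ (νb * E) * (P + κb * E) :=
      mul_le_mul hg1 hg2 (norm_nonneg _) (by positivity)
    have h6 : ‖gradient V (x a)‖ * ‖F (x t) u - F (x a) u‖ ≤ G * (κb * E) :=
      mul_le_mul_of_nonneg_left hg3 hG0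
    have h7 : |φ t - φ a| ≤ (νb * E) * (P + κb * E) + G * (κb * E) := by linarith
    -- now substitute E = P * τ * A and use the Assumption 4' bounds
    have key : (νb * E) * (P + κb * E) + G * (κb * E) ≤ C₁ * w * τ := by
      rw [hE_def, hC₁_def]
      have e1 : (νb * (P * τ * A)) * (P + κb * (P * τ * A)) + G * (κb * (P * τ * A)) =
          νb * A * τ * P ^ 2 + νb * κb * A ^ 2 * (τ * τ) * P ^ 2 + κb * A * τ * (G * P) := by
        ring
      rw [e1]
      have d1 : νb * A * τ * P ^ 2 ≤ νb * A * τ * (Mb * w) :=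
        mul_le_mul_of_nonneg_left hFn2 (by positivity)
      have d2 : νb * κb * A ^ 2 * (τ * τ) * P ^ 2 ≤ νb * κb * A ^ 2 * τ * (Mb * w) := by
        have h8 : (τ * τ) * P ^ 2 ≤ τ * (Mb * w) := by
          have h9 : (τ * τ) * P ^ 2 ≤ (τ * 1) * (Mb * w) := by
            apply mul_le_mul _ hFn2 (by positivity) (by positivity)
            exact mul_le_mul_of_nonneg_left hτ1 hτpos.le
          linarith [h9]
        calc νb * κb * A ^ 2 * (τ * τ) * P ^ 2 = νb * κb * A ^ 2 * ((τ * τ) * P ^ 2) := by ring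
        _ ≤ νb * κb * A ^ 2 * (τ * (Mb * w)) := mul_le_mul_of_nonneg_left h8 (by positivity)
        _ = νb * κb * A ^ 2 * τ * (Mb * w) := by ring
      have d3 : κb * A * τ * (G * P) ≤ κb * A * τ * (Mb * w) :=
        mul_le_mul_of_nonneg_left hGF (by positivity)
      have efin : νb * A * τ * (Mb * w) + νb * κb * A ^ 2 * τ * (Mb * w) +
          κb * A * τ * (Mb * w) = (νb * A * (1 + κb * A) + κb * A) * Mb * w * τ := by ring
      linarith
    linarith
  -- bound on the decrease of V
  have habsφ : ∀ t ∈ Ico a b, |φ t| ≤ w + C₁ * w * τ := by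
    intro t ht
    have h1 := hφdiff t ⟨ht.1, ht.2.le⟩
    rw [abs_sub_le_iff] at h1
    have h2 : φ t ≤ 0 := hφnonpos t ⟨ht.1, ht.2.le⟩
    rw [abs_of_nonpos h2]
    have : φ a = -w := by rw [hw_def]; ring
    linarith [h1.2]
  have hΔbd : |ψ b - ψ a| ≤ (w + C₁ * w * τ) * τ := by
    have h1 := norm_image_sub_le_of_norm_deriv_right_le_segment hψcont hψd
      (fun t ht => by rw [Real.norm_eq_abs]; exact habsφ t ht) b (right_mem_Icc.2 hab.le)
    rw [Real.norm_eq_abs] at h1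
    calc |ψ b - ψ a| ≤ (w + C₁ * w * τ) * (b - a) := h1
    _ = (w + C₁ * w * τ) * τ := by rw [hτ_def]
  set ΔV : ℝ := V (x a) - V (x b) with hΔV_def
  have hΔV0 : 0 ≤ ΔV := by
    rw [hΔV_def]
    linarith [hB b (right_mem_Icc.2 hab.le)]
  have hΔVle : ΔV ≤ (w + C₁ * w * τ) * τ := by
    have h3 : ΔV ≤ |ψ b - ψ a| := by
      have h4 : ψ b - ψ a = V (x b) - V (x a) := rfl
      rw [hΔV_def, h4, abs_sub_comm]
      exact le_abs_self _
    linarith [hΔbd]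
  -- MVT for γ
  have hγb : γ (V (x b)) ≤ γ (V (x a)) + cb * ΔV := by
    rcases eq_or_lt_of_le (show V (x b) ≤ V (x a) from hB b (right_mem_Icc.2 hab.le)) with h | h
    · rw [h]
      have h9 : 0 ≤ cb * ΔV := mul_nonneg hcb0 hΔV0
      linarith
    · obtain ⟨ξ, hξ, hξeq⟩ := exists_hasDerivAt_eq_slope γ (deriv γ) h
        (hγ1.continuous.continuousOn)
        (fun s _ => ((hγ1.differentiable one_ne_zero) s).hasDerivAt)
      have hξ0 : 0 ≤ ξ := le_trans (hVnn (x b)) hξ.1.le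
      have h1 : c ≤ deriv γ ξ := hc ξ hξ0
      have h2 : deriv γ ξ = (γ (V (x a)) - γ (V (x b))) / (V (x a) - V (x b)) := hξeq
      have h3 : 0 < V (x a) - V (x b) := sub_pos.2 h
      have h4 : γ (V (x a)) - γ (V (x b)) = deriv γ ξ * (V (x a) - V (x b)) := by
        rw [h2]; field_simp
      have h5 : -c ≤ cb := le_max_left _ _
      have h6 : deriv γ ξ * (V (x a) - V (x b)) ≥ c * (V (x a) - V (x b)) :=
        mul_le_mul_of_nonneg_right h1 h3.le
      have h7 : c * (V (x a) - V (x b)) ≥ -cb * (V (x a) - V (x b)) := by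
        have h7' : 0 ≤ (c + cb) * (V (x a) - V (x b)) :=
          mul_nonneg (by linarith) h3.le
        linarith [h7']
      rw [hΔV_def]
      linarith [h4, h6, h7]
  -- trigger condition at b
  have htb : φ b = -σ * γ (V (x b)) := htrig n
  -- upper bound: φ b ≤ -w + C₁ * w * τ
  have hup : φ b ≤ -w + C₁ * w * τ := by
    have h1 := hφdiff b (right_mem_Icc.2 hab.le)
    rw [abs_sub_le_iff] at h1
    have : φ a = -w := by rw [hw_def]; ring
    linarith [h1.1]
  -- lower bound via the trigger
  have hlow : -σ * w - σ * cb * ΔV ≤ φ b := by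
    rw [htb]
    have h1 : γ (V (x b)) ≤ w + cb * ΔV := by linarith [hγb, hwγ]
    have h2 : σ * γ (V (x b)) ≤ σ * (w + cb * ΔV) :=
      mul_le_mul_of_nonneg_left h1 hσ0.le
    linarith [h2]
  -- combine
  have hmain : (1 - σ) * w ≤ C₂ * w * τ := by
    have h1 : (1 - σ) * w ≤ C₁ * w * τ + σ * cb * ΔV := by linarith
    have h2 : σ * cb * ΔV ≤ σ * cb * ((w + C₁ * w * τ) * τ) :=
      mul_le_mul_of_nonneg_left hΔVle (by positivity)
    have h3 : σ * cb * ((w + C₁ * w * τ) * τ) ≤ σ * cb * ((1 + C₁) * w * τ) := by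
      apply mul_le_mul_of_nonneg_left _ (by positivity)
      have h3' : (C₁ * w * τ) * τ ≤ (C₁ * w * τ) * 1 :=
        mul_le_mul_of_nonneg_left hτ1 (by positivity)
      linarith [h3']
    rw [hC₂_def]
    linarith [h1, h2, h3]
  have hfin : (1 - σ) ≤ C₂ * τ := by
    by_contra hno
    push_neg at hno
    have h1 : C₂ * τ * w < (1 - σ) * w := mul_lt_mul_of_pos_right hno hwpos
    linarith [h1, hmain]
  have hτbad : τ * (C₂ + 1) < 1 - σ :=
    (lt_div_iff₀ (by positivity : (0:ℝ) < C₂ + 1)).1 hτε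
  linarith [hfin, hτbad, hτpos]
end
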